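/- arXiv:1109.5801 — 10 statements merged into one kernel-verified Lean document; each statement's English description precedes it below -/
import Mathlib

section
/- Let A be a finite nonempty alphabet and let x : ℕ → A be a sequence. For n ≥ 1 let p_x(n) denote the number of distinct factors of length n of x, i.e. the number of distinct words (x(i), x(i+1), …, x(i+n−1)) for i ∈ ℕ. Then the following are equivalent: (1) x is ultimately periodic, i.e. there exist N ∈ ℕ and p ≥ 1 such that x(m+p) = x(m) for all m ≥ N; (2) there exists n ≥ 1 such that p_x(n) ≤ n; (3) there exist n₀ ∈ ℕ and C ∈ ℕ such that p_x(n) ≤ C for all n ≥ n₀. -/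
open Classical

noncomputable section

/-- `p_x(n)`: the number of distinct factors of length `n` of the sequence `x`. -/
def factorCount {A : Type} (x : ℕ → A) (n : ℕ) : ℕ :=
  Set.ncard {w : Fin n → A | ∃ i : ℕ, ∀ j : Fin n, w j = x (i + j)}

namespace MorseHedlundAux

variable {A : Type} [Fintype A]

/-- The factor of length `k` starting at position `i`. -/
def fac (x : ℕ → A) (k i : ℕ) : Fin k → A := fun j => x (i + j)

lemma fset_eq_range (x : ℕ → A) (n : ℕ) :
    {w : Fin n → A | ∃ i : ℕ, ∀ j : Fin n, w j = x (i + j)} = Set.range (fac x n) := by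
  ext w
  simp only [Set.mem_setOf_eq, Set.mem_range]
  constructor
  · rintro ⟨i, hi⟩; exact ⟨i, by funext j; exact (hi j).symm⟩
  · rintro ⟨i, rfl⟩; exact ⟨i, fun j => rfl⟩

lemma factorCount_eq (x : ℕ → A) (n : ℕ) :
    factorCount x n = (Set.range (fac x n)).ncard := by
  rw [factorCount, fset_eq_range]

lemma restrict_fac (x : ℕ → A) (k i : ℕ) :
    (fac x (k + 1) i) ∘ Fin.castSucc = fac x k i := by
  funext j
  simp [fac, Fin.coe_castSucc]

lemma range_eq_image (x : ℕ → A) (k : ℕ) :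
    Set.range (fac x k) = (fun w : Fin (k + 1) → A => w ∘ Fin.castSucc) '' Set.range (fac x (k + 1)) := by
  have h : fac x k = (fun w : Fin (k + 1) → A => w ∘ Fin.castSucc) ∘ fac x (k + 1) := by
    funext i
    exact (restrict_fac x k i).symm
  rw [h, Set.range_comp]

lemma factorCount_mono_succ (x : ℕ → A) (k : ℕ) :
    factorCount x k ≤ factorCount x (k + 1) := by
  rw [factorCount_eq, factorCount_eq, range_eq_image]
  exact Set.ncard_image_le (Set.toFinite _)

lemma factorCount_pos (x : ℕ → A) (n : ℕ) : 1 ≤ factorCount x n := by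
  rw [factorCount_eq]
  exact (Set.ncard_pos (Set.toFinite _)).2 ⟨fac x n 0, Set.mem_range_self 0⟩

/-- Key step: if `p(k+1) ≤ p(k)` then equal factors of length `k` have equal
extensions of length `k+1`. -/
lemma ext_step (x : ℕ → A) (k : ℕ) (h : factorCount x (k + 1) ≤ factorCount x k)
    (i j : ℕ) (hij : fac x k i = fac x k j) : fac x (k + 1) i = fac x (k + 1) j := by
  have hle : factorCount x k ≤ factorCount x (k + 1) := factorCount_mono_succ x k
  have heq : ((fun w : Fin (k + 1) → A => w ∘ Fin.castSucc) '' Set.range (fac x (k + 1))).ncard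
      = (Set.range (fac x (k + 1))).ncard := by
    rw [← range_eq_image, ← factorCount_eq, ← factorCount_eq]
    exact le_antisymm hle h
  have hinj : Set.InjOn (fun w : Fin (k + 1) → A => w ∘ Fin.castSucc)
      (Set.range (fac x (k + 1))) :=
    Set.injOn_of_ncard_image_eq heq (Set.toFinite _)
  apply hinj (Set.mem_range_self i) (Set.mem_range_self j)
  simp only [restrict_fac, hij]

lemma fac_succ_shift (x : ℕ → A) (k i : ℕ) (j : Fin k) :
    fac x k (i + 1) j = fac x (k + 1) i j.succ := by
  simp [fac, Fin.val_succ]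
  ring_nf

lemma shift_eq (x : ℕ → A) (k : ℕ) (h : factorCount x (k + 1) ≤ factorCount x k)
    (i j : ℕ) (hij : fac x k i = fac x k j) :
    ∀ t : ℕ, fac x k (i + t) = fac x k (j + t) := by
  intro t
  induction t with
  | zero => simpa using hij
  | succ t ih =>
      have h1 : fac x (k + 1) (i + t) = fac x (k + 1) (j + t) := ext_step x k h _ _ ih
      funext m
      have := congrFun h1 m.succ
      rw [← fac_succ_shift, ← fac_succ_shift] at this
      rw [show i + (t + 1) = i + t + 1 by ring, show j + (t + 1) = j + t + 1 by ring]
      exact congrFun (by funext m'; rw [fac_succ_shift, h1, ← fac_succ_shift]) m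

/-- The hard direction: `p(n) ≤ n` for some `n ≥ 1` implies eventual periodicity. -/
lemma two_to_one (x : ℕ → A) (n : ℕ) (hn : 1 ≤ n) (hpn : factorCount x n ≤ n) :
    ∃ (N p : ℕ), 1 ≤ p ∧ ∀ m : ℕ, N ≤ m → x (m + p) = x m := by
  -- First find k ≥ 1 with p(k+1) ≤ p(k), or x is constant.
  by_cases hconst : ∀ i : ℕ, x i = x 0
  · exact ⟨0, 1, le_refl 1, fun m _ => by rw [hconst (m + 1), hconst m]⟩
  -- x not constant, so p(1) ≥ 2.
  have h1 : 2 ≤ factorCount x 1 := by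
    push_neg at hconst
    obtain ⟨i, hi⟩ := hconst
    rw [factorCount_eq]
    have : ({fac x 1 i, fac x 1 0} : Set (Fin 1 → A)) ⊆ Set.range (fac x 1) := by
      rintro w (rfl | rfl) <;> exact Set.mem_range_self _
    calc 2 = ({fac x 1 i, fac x 1 0} : Set (Fin 1 → A)).ncard := by
            rw [Set.ncard_pair]
            intro hcontra
            exact hi (congrFun hcontra ⟨0, Nat.one_pos⟩)
      _ ≤ (Set.range (fac x 1)).ncard := Set.ncard_le_ncard this (Set.toFinite _)
  -- Find k with 1 ≤ k and p(k+1) ≤ p(k)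
  have hk : ∃ k : ℕ, 1 ≤ k ∧ factorCount x (k + 1) ≤ factorCount x k := by
    by_contra hcon
    push_neg at hcon
    have hgrow : ∀ m : ℕ, 1 ≤ m → m + 1 ≤ factorCount x m := by
      intro m hm
      induction m with
      | zero => omega
      | succ m ih =>
          rcases Nat.eq_zero_or_pos m with rfl | h2
          · simpa using h1
          · have := hcon m h2
            have := ih h2
            omega
    have := hgrow n hn
    omega
  obtain ⟨k, hk1, hkle⟩ := hk
  -- Pigeonhole: two equal factors of length k
  obtain ⟨a, b, hab, hfab⟩ :=
    Finite.exists_ne_map_eq_of_infinite (fac x k)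
  -- wlog a < b
  rcases lt_or_gt_of_ne hab with hlt | hlt
  · refine ⟨a, b - a, by omega, fun m hm => ?_⟩
    have ht := shift_eq x k hkle a b hfab (m - a)
    have h1 := congrFun ht ⟨0, by omega⟩
    simp only [fac] at h1
    have e1 : a + (m - a) = m := by omega
    have e2 : b + (m - a) = m + (b - a) := by omega
    rw [e1, e2] at h1
    simpa using h1.symm
  · refine ⟨b, a - b, by omega, fun m hm => ?_⟩
    have ht := shift_eq x k hkle b a hfab.symm (m - b)
    have h1 := congrFun ht ⟨0, by omega⟩
    simp only [fac] at h1
    have e1 : b + (m - b) = m := by omega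
    have e2 : a + (m - b) = m + (a - b) := by omega
    rw [e1, e2] at h1
    simpa using h1.symm

lemma one_to_three (x : ℕ → A) (N p : ℕ) (hp : 1 ≤ p)
    (hper : ∀ m : ℕ, N ≤ m → x (m + p) = x m) (n : ℕ) :
    factorCount x n ≤ N + p := by
  rw [factorCount_eq]
  have hsub : Set.range (fac x n) ⊆ fac x n '' (Set.Iio (N + p)) := by
    rintro w ⟨i, rfl⟩
    induction i using Nat.strong_induction_on with
    | _ i ih =>
      by_cases hi : i < N + p
      · exact ⟨i, hi, rfl⟩
      · have heq : fac x n i = fac x n (i - p) := by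
          funext j
          simp only [fac]
          have : i - p + ↑j + p = i + ↑j := by omega
          rw [← this, hper (i - p + ↑j) (by omega)]
        rw [heq]
        exact ih (i - p) (by omega)
  calc (Set.range (fac x n)).ncard ≤ (fac x n '' (Set.Iio (N + p))).ncard :=
        Set.ncard_le_ncard hsub (Set.toFinite _)
    _ ≤ (Set.Iio (N + p)).ncard := Set.ncard_image_le (Set.finite_Iio _)
    _ = N + p := by
        rw [← Finset.coe_range, Set.ncard_coe_finset, Finset.card_range]

end MorseHedlundAux

/-- Morse–Hedlund theorem. -/
theorem morse_hedlund {A : Type} [Fintype A] [Nonempty A] (x : ℕ → A) :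
    List.TFAE
      [ ∃ (N p : ℕ), 1 ≤ p ∧ ∀ m : ℕ, N ≤ m → x (m + p) = x m,
        ∃ n : ℕ, 1 ≤ n ∧ factorCount x n ≤ n,
        ∃ (n₀ C : ℕ), ∀ n : ℕ, n₀ ≤ n → factorCount x n ≤ C ] := by
  tfae_have 1 → 3 := by
    rintro ⟨N, p, hp, hper⟩
    exact ⟨0, N + p, fun n _ => MorseHedlundAux.one_to_three x N p hp hper n⟩
  tfae_have 3 → 2 := by
    rintro ⟨n₀, C, hC⟩
    refine ⟨max (max n₀ C) 1, le_max_right _ _, ?_⟩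
    calc factorCount x (max (max n₀ C) 1) ≤ C := hC _ (le_trans (le_max_left _ _) (le_max_left _ _))
      _ ≤ max (max n₀ C) 1 := le_trans (le_max_right _ _) (le_max_left _ _)
  tfae_have 2 → 1 := by
    rintro ⟨n, hn, hpn⟩
    exact MorseHedlundAux.two_to_one x n hn hpn
  tfae_finish

end
end

section
/- Let d ≥ 1 and let X ⊆ ℤ^d be semilinear. Then there exists C > 0 such that R_X(n) ≤ C·n^{d−1} for all n ≥ 1. -/
open Classical

noncomputable section

/-- Sup norm of an integer vector. -/
def supNorm {ι : Type} [Fintype ι] (x : ι → ℤ) : ℕ :=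
  Finset.univ.sup fun i => (x i).natAbs

/-- The block of size `n` of `M` at `x`. -/
def blockOf {ι : Type} [Fintype ι] (M : Set (ι → ℤ)) (x : ι → ℤ) (n : ℕ) :
    (ι → Fin n) → Prop :=
  fun w => (fun i => x i + (w i : ℤ)) ∈ M

/-- A block is recurrent if it occurs at points of arbitrarily large norm. -/
def IsRecurrentBlock {ι : Type} [Fintype ι] (M : Set (ι → ℤ)) (n : ℕ)
    (B : (ι → Fin n) → Prop) : Prop :=
  ∀ L : ℕ, ∃ x : ι → ℤ, L ≤ supNorm x ∧ blockOf M x n = B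

/-- `R_M(n)`: number of distinct recurrent blocks of size `n`. -/
def recBlockCount {ι : Type} [Fintype ι] (M : Set (ι → ℤ)) (n : ℕ) : ℕ :=
  Set.ncard {B : (ι → Fin n) → Prop | IsRecurrentBlock M n B}

/-- `p_M(n)`: number of distinct blocks of size `n`. -/
def blockCount {ι : Type} [Fintype ι] (M : Set (ι → ℤ)) (n : ℕ) : ℕ :=
  Set.ncard {B : (ι → Fin n) → Prop | ∃ x, blockOf M x n = B}

/-- Linear subset of `ℤ^ι`. -/
def IsLinearSetZd {ι : Type} [Fintype ι] (S : Set (ι → ℤ)) : Prop :=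
  ∃ (x : ι → ℤ) (V : Finset (ι → ℤ)),
    S = {y | ∃ c : (ι → ℤ) → ℕ, y = x + ∑ v ∈ V, (c v : ℤ) • v}

/-- Semilinear = finite union of linear sets. -/
def IsSemilinearSetZd {ι : Type} [Fintype ι] (S : Set (ι → ℤ)) : Prop :=
  ∃ F : Finset (Set (ι → ℤ)), (∀ T ∈ F, IsLinearSetZd T) ∧ S = ⋃ T ∈ F, T

/-- Section `M_{i,c}` of a subset of `ℤ^(d+1)`. -/
def sectionSet {d : ℕ} (M : Set (Fin (d + 1) → ℤ)) (i : Fin (d + 1)) (c : ℤ) :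
    Set (Fin d → ℤ) :=
  {y | i.insertNth c y ∈ M}

/-- Open ball (for the sup norm) of radius `K` centered at `x`. -/
def ball {ι : Type} [Fintype ι] (x : ι → ℤ) (K : ℕ) : Set (ι → ℤ) :=
  {y | supNorm (x - y) < K}

/-- `M` is `v`-periodic inside `X`. -/
def vPeriodicInside {ι : Type} [Fintype ι] (M : Set (ι → ℤ)) (v : ι → ℤ)
    (X : Set (ι → ℤ)) : Prop :=
  ∀ m : ι → ℤ, m ∈ X → m + v ∈ X → (m ∈ M ↔ m + v ∈ M)

/-- Border of `A` in direction `v`. -/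
def border {ι : Type} (A : Set (ι → ℤ)) (v : ι → ℤ) : Set (ι → ℤ) :=
  {x | x ∈ A ∧ x + v ∉ A}

/-- `(d-k)`-dimensional section of `M ⊆ ℤ^d` obtained by fixing the coordinates
in the range of `g` to the corresponding constants `c`. -/
def multiSection {d k : ℕ} (M : Set (Fin d → ℤ)) (g : Fin k → Fin d)
    (c : Fin k → ℤ) : Set ({j : Fin d // ∀ m, g m ≠ j} → ℤ) :=
  {y | (fun j : Fin d =>
    if h : ∃ m, g m = j then c (Classical.choose h)
    else y ⟨j, fun m hm => h ⟨m, hm⟩⟩) ∈ M}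

/-- Repetitivity of a subset of `ℤ^ι`. -/
def Repetitive {ι : Type} [Fintype ι] (M : Set (ι → ℤ)) : Prop :=
  ∀ n : ℕ, 1 ≤ n → ∃ R : ℕ, ∀ x y : ι → ℤ, ∃ z : ι → ℤ,
    supNorm (z - y) ≤ R ∧ blockOf M z n = blockOf M x n

/-- Ideal crystal: `d` linearly independent translation periods. -/
def IsIdealCrystal {d : ℕ} (M : Set (Fin d → ℤ)) : Prop :=
  ∃ p : Fin d → (Fin d → ℤ), LinearIndependent ℤ p ∧
    ∀ i, (fun x => x + p i) '' M = M

namespace SLAux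
variable {ι : Type} [Fintype ι]



variable {ι : Type} [Fintype ι]

def dot (a y : ι → ℤ) : ℤ := ∑ j, a j * y j

lemma dot_sub_nsmul (a y v : ι → ℤ) (c : ℤ) :
    dot a (fun j => y j - c * v j) = dot a y - c * dot a v := by
  unfold dot
  rw [Finset.mul_sum, ← Finset.sum_sub_distrib]
  congr 1; funext j; ring

lemma dot_add_cast (a x : ι → ℤ) (w : ι → ℤ) :
    dot a (fun j => x j + w j) = dot a x + dot a w := by
  unfold dot
  rw [← Finset.sum_add_distrib]
  congr 1; funext j; ring

lemma dot_smul_add (c d : ℤ) (a b y : ι → ℤ) :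
    dot (fun j => c * a j + d * b j) y = c * dot a y + d * dot b y := by
  unfold dot
  rw [Finset.mul_sum, Finset.mul_sum, ← Finset.sum_add_distrib]
  congr 1; funext j; ring

/-- Invariance class: membership in `X` is determined by finitely many
halfspace booleans and residues mod `m`. -/
def InvClass (X : Set (ι → ℤ)) : Prop :=
  ∃ (P : Finset ((ι → ℤ) × ℤ)) (m : ℕ), 0 < m ∧
    ∀ y z : ι → ℤ,
      (∀ p ∈ P, (p.2 ≤ dot p.1 y ↔ p.2 ≤ dot p.1 z)) →
      (∀ j, (m : ℤ) ∣ (y j - z j)) →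
      (y ∈ X ↔ z ∈ X)

lemma invClass_empty : InvClass (∅ : Set (ι → ℤ)) :=
  ⟨∅, 1, one_pos, fun _ _ _ _ => Iff.rfl⟩

lemma invClass_union {X Y : Set (ι → ℤ)} (hX : InvClass X) (hY : InvClass Y) :
    InvClass (X ∪ Y) := by
  obtain ⟨P, m, hm, hP⟩ := hX
  obtain ⟨Q, k, hk, hQ⟩ := hY
  refine ⟨P ∪ Q, m * k, Nat.mul_pos hm hk, fun y z hiq hres => ?_⟩
  have h1 : y ∈ X ↔ z ∈ X := by
    refine hP y z (fun p hp => hiq p (Finset.mem_union_left _ hp)) (fun j => ?_)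
    exact dvd_trans (by exact_mod_cast Dvd.intro k rfl) (hres j)
  have h2 : y ∈ Y ↔ z ∈ Y := by
    refine hQ y z (fun p hp => hiq p (Finset.mem_union_right _ hp)) (fun j => ?_)
    exact dvd_trans (by exact_mod_cast Dvd.intro_left m rfl) (hres j)
  constructor <;> rintro (h | h)
  · exact Or.inl (h1.mp h)
  · exact Or.inr (h2.mp h)
  · exact Or.inl (h1.mpr h)
  · exact Or.inr (h2.mpr h)

lemma invClass_singleton (x : ι → ℤ) : InvClass ({x} : Set (ι → ℤ)) := by
  classical
  -- halfspaces: for each coordinate j, (e_j, x j) and (-e_j, -x j)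
  refine ⟨(Finset.univ.image fun j : ι => ((fun i => if i = j then (1:ℤ) else 0), x j))
      ∪ (Finset.univ.image fun j : ι => ((fun i => if i = j then (-1:ℤ) else 0), -(x j))),
    1, one_pos, fun y z hiq _ => ?_⟩
  have key : ∀ j, (x j ≤ y j ↔ x j ≤ z j) ∧ (-(x j) ≤ -(y j) ↔ -(x j) ≤ -(z j)) := by
    intro j
    have e1 : dot (fun i => if i = j then (1:ℤ) else 0) y = y j := by
      unfold dot; simp [mul_comm]
    constructor
    · have := hiq ((fun i => if i = j then (1:ℤ) else 0), x j)
        (Finset.mem_union_left _ (Finset.mem_image.mpr ⟨j, Finset.mem_univ _, rfl⟩))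
      simpa [dot, mul_comm] using this
    · have := hiq ((fun i => if i = j then (-1:ℤ) else 0), -(x j))
        (Finset.mem_union_right _ (Finset.mem_image.mpr ⟨j, Finset.mem_univ _, rfl⟩))
      simpa [dot] using this
  have heq : ∀ j, (y j = x j ↔ z j = x j) := by
    intro j
    obtain ⟨h1, h2⟩ := key j
    simp only [neg_le_neg_iff] at h2
    constructor <;> intro h <;> omega
  constructor <;> intro h
  · have : y = x := h
    funext j
    exact (heq j).mp (by rw [this])
  · have : z = x := h
    funext j
    exact (heq j).mpr (by rw [this])


/-- Cooper-style lemma: if a predicate on ℕ is determined by finitely many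
threshold booleans `l ≤ n` and the residue of `n` mod `m`, then any satisfiable
such predicate has a witness within `m` of `0` or of one of the thresholds. -/
lemma cooper (L : Finset ℤ) (m : ℕ) (hm : 0 < m) (φ : ℕ → Prop)
    (hφ : ∀ n n' : ℕ, (∀ l ∈ L, (l ≤ (n:ℤ) ↔ l ≤ (n':ℤ))) → ((m:ℤ) ∣ (n:ℤ) - n') →
      (φ n ↔ φ n'))
    (h : ∃ n, φ n) :
    ∃ n : ℕ, φ n ∧ (n < m ∨ ∃ l ∈ L, ∃ j : ℕ, j < m ∧ (n : ℤ) = l + j) := by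
  classical
  obtain ⟨n0, hn0⟩ := h
  -- minimal witness
  have hex : ∃ n, φ n := ⟨n0, hn0⟩
  set n := Nat.find hex with hn
  have hφn : φ n := Nat.find_spec hex
  by_cases hsmall : n < m
  · exact ⟨n, hφn, Or.inl hsmall⟩
  push_neg at hsmall
  have hn' : ¬ φ (n - m) := Nat.find_min hex (by omega)
  -- some threshold separates n - m and n
  by_cases hsep : ∀ l ∈ L, (l ≤ ((n - m : ℕ):ℤ) ↔ l ≤ (n:ℤ))
  · exfalso
    apply hn'
    refine (hφ n (n - m) (fun l hl => (hsep l hl).symm) ?_).mp hφn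
    have : ((n - m : ℕ) : ℤ) = (n:ℤ) - m := by omega
    rw [this]; simp
  · push_neg at hsep
    obtain ⟨l, hl, hnl⟩ := hsep
    have hc : ((n - m : ℕ) : ℤ) = (n:ℤ) - m := by omega
    -- since n - m < n, must be: ¬(l ≤ n-m) and l ≤ n
    have h1 : l ≤ (n:ℤ) ∧ ¬ (l ≤ ((n-m:ℕ):ℤ)) := by
      rw [hc] at hnl ⊢
      omega
    refine ⟨n, hφn, Or.inr ⟨l, hl, (n - l).toNat, ?_, ?_⟩⟩
    · rw [hc] at h1; omega
    · rw [hc] at h1; omega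


lemma dvd_dot_sub' {ι : Type} [Fintype ι] {M : ℤ} {y z : ι → ℤ}
    (h : ∀ j, M ∣ y j - z j) (a : ι → ℤ) :
    M ∣ (∑ j, a j * y j) - (∑ j, a j * z j) := by
  rw [← Finset.sum_sub_distrib]
  refine Finset.dvd_sum fun j _ => ?_
  have : a j * y j - a j * z j = a j * (y j - z j) := by ring
  rw [this]
  exact Dvd.dvd.mul_left (h j) _

lemma ediv_transfer {β mm q q' : ℤ} (hβ : 0 < β) (h : β * mm ∣ q - q') :
    mm ∣ q / β - q' / β ∧ q % β = q' % β := by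
  obtain ⟨t, ht⟩ := h
  have hq : q = q' + β * (mm * t) := by linarith
  constructor
  · rw [hq, Int.add_mul_ediv_left _ _ (ne_of_gt hβ)]
    simp [mul_comm]
  · rw [hq, Int.add_mul_emod_self_left]

lemma bool_neg {β q : ℤ} (n : ℤ) (hβ : 0 < β) : (0 ≤ q + n * β) ↔ (-(q / β) ≤ n) := by
  rw [neg_le]
  rw [Int.le_ediv_iff_mul_le hβ]
  constructor <;> intro <;> nlinarith

lemma bool_pos {β q : ℤ} (n : ℤ) (hβ : 0 < β) : (n * β ≤ q) ↔ ¬ (q / β + 1 ≤ n) := by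
  rw [← Int.le_ediv_iff_mul_le hβ]
  omega

/-- threshold of the boolean `p.2 ≤ dot p.1 (w - n v)` viewed as a function of `n`. -/
def thr (v : ι → ℤ) (p : (ι → ℤ) × ℤ) (w : ι → ℤ) : ℤ :=
  if dot p.1 v < 0 then -((dot p.1 w - p.2) / ((dot p.1 v).natAbs : ℤ))
  else if 0 < dot p.1 v then (dot p.1 w - p.2) / ((dot p.1 v).natAbs : ℤ) + 1
  else 0

lemma natAbs_pos_cast {a : ℤ} (h : a ≠ 0) : (0:ℤ) < (a.natAbs : ℤ) := by omega

lemma thr_char_neg {v : ι → ℤ} {p : (ι → ℤ) × ℤ} (h : dot p.1 v < 0) (w : ι → ℤ) (n : ℤ) :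
    (p.2 ≤ dot p.1 (fun j => w j - n * v j)) ↔ thr v p w ≤ n := by
  rw [dot_sub_nsmul, thr, if_pos h]
  have hβ : ((dot p.1 v).natAbs : ℤ) = -(dot p.1 v) := by omega
  rw [hβ, ← bool_neg n (by omega : (0:ℤ) < -(dot p.1 v))]
  constructor <;> intro <;> linarith

lemma thr_char_pos {v : ι → ℤ} {p : (ι → ℤ) × ℤ} (h : 0 < dot p.1 v) (w : ι → ℤ) (n : ℤ) :
    (p.2 ≤ dot p.1 (fun j => w j - n * v j)) ↔ ¬ (thr v p w ≤ n) := by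
  rw [dot_sub_nsmul, thr, if_neg (by omega), if_pos h]
  have hβ : ((dot p.1 v).natAbs : ℤ) = dot p.1 v := by omega
  rw [hβ, ← bool_pos n h]
  constructor <;> intro <;> linarith

lemma thr_char_zero {v : ι → ℤ} {p : (ι → ℤ) × ℤ} (h : dot p.1 v = 0) (w : ι → ℤ) (n : ℤ) :
    (p.2 ≤ dot p.1 (fun j => w j - n * v j)) ↔ (p.2 ≤ dot p.1 w) := by
  rw [dot_sub_nsmul, h, mul_zero, sub_zero]

lemma thr_mul_neg {v : ι → ℤ} {p : (ι → ℤ) × ℤ} (h : dot p.1 v < 0) (w : ι → ℤ) :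
    ((dot p.1 v).natAbs : ℤ) * thr v p w
      = (dot p.1 w - p.2) % ((dot p.1 v).natAbs : ℤ) - (dot p.1 w - p.2) := by
  rw [thr, if_pos h]
  have := Int.mul_ediv_add_emod (dot p.1 w - p.2) ((dot p.1 v).natAbs : ℤ)
  linarith

lemma thr_mul_pos {v : ι → ℤ} {p : (ι → ℤ) × ℤ} (h : 0 < dot p.1 v) (w : ι → ℤ) :
    ((dot p.1 v).natAbs : ℤ) * thr v p w
      = (dot p.1 w - p.2) - (dot p.1 w - p.2) % ((dot p.1 v).natAbs : ℤ)
        + ((dot p.1 v).natAbs : ℤ) := by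
  rw [thr, if_neg (by omega), if_pos h]
  have := Int.mul_ediv_add_emod (dot p.1 w - p.2) ((dot p.1 v).natAbs : ℤ)
  linarith [mul_add ((dot p.1 v).natAbs : ℤ) ((dot p.1 w - p.2) / ((dot p.1 v).natAbs : ℤ)) 1]

lemma thr_ge_iff_neg {v : ι → ℤ} {p : (ι → ℤ) × ℤ} (h : dot p.1 v < 0) (w : ι → ℤ) (t : ℤ) :
    (t ≤ thr v p w) ↔ ¬ (p.2 + ((dot p.1 v).natAbs : ℤ) * (1 - t) ≤ dot p.1 w) := by
  have hβ : (0:ℤ) < ((dot p.1 v).natAbs : ℤ) := natAbs_pos_cast (by omega)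
  rw [thr, if_pos h, le_neg]
  rw [show ((dot p.1 w - p.2) / ((dot p.1 v).natAbs : ℤ) ≤ -t)
      ↔ ¬(-t + 1 ≤ (dot p.1 w - p.2) / ((dot p.1 v).natAbs : ℤ)) by omega]
  rw [Int.le_ediv_iff_mul_le hβ]
  constructor <;> intro hh hc <;> apply hh <;> nlinarith

lemma thr_ge_iff_pos {v : ι → ℤ} {p : (ι → ℤ) × ℤ} (h : 0 < dot p.1 v) (w : ι → ℤ) (t : ℤ) :
    (t ≤ thr v p w) ↔ (p.2 + ((dot p.1 v).natAbs : ℤ) * (t - 1) ≤ dot p.1 w) := by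
  have hβ : (0:ℤ) < ((dot p.1 v).natAbs : ℤ) := natAbs_pos_cast (by omega)
  rw [thr, if_neg (by omega), if_pos h]
  rw [show (t ≤ (dot p.1 w - p.2) / ((dot p.1 v).natAbs : ℤ) + 1)
      ↔ (t - 1 ≤ (dot p.1 w - p.2) / ((dot p.1 v).natAbs : ℤ)) by omega]
  rw [Int.le_ediv_iff_mul_le hβ]
  constructor <;> intro <;> nlinarith


end SLAux
namespace SLAuxB
open SLAux
variable {ι : Type} [Fintype ι]

lemma scaled_neg {v : ι → ℤ} {p0 p : (ι → ℤ) × ℤ} (hs : dot p0.1 v < 0) (w : ι → ℤ) (t : ℤ) :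
    (p.2 ≤ dot p.1 (fun i => w i - (thr v p0 w + t) * v i)) ↔
      (((dot p0.1 v).natAbs : ℤ) * p.2
        + dot p.1 v * ((dot p0.1 w - p0.2) % ((dot p0.1 v).natAbs : ℤ))
        + dot p.1 v * p0.2 + t * dot p.1 v * ((dot p0.1 v).natAbs : ℤ)
        ≤ dot (fun i => ((dot p0.1 v).natAbs : ℤ) * p.1 i + dot p.1 v * p0.1 i) w) := by
  have hβ0 : (0:ℤ) < ((dot p0.1 v).natAbs : ℤ) := natAbs_pos_cast (by omega)
  rw [dot_sub_nsmul, dot_smul_add]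
  have hml := thr_mul_neg hs w
  have hexp : ((dot p0.1 v).natAbs : ℤ) * (dot p.1 w - (thr v p0 w + t) * dot p.1 v)
      = (((dot p0.1 v).natAbs : ℤ) * dot p.1 w + dot p.1 v * dot p0.1 w)
        - (dot p.1 v * ((dot p0.1 w - p0.2) % ((dot p0.1 v).natAbs : ℤ))
            + dot p.1 v * p0.2 + t * dot p.1 v * ((dot p0.1 v).natAbs : ℤ)) := by
    linear_combination (-(dot p.1 v)) * hml
  constructor <;> intro h
  · have hmul := mul_le_mul_of_nonneg_left h (le_of_lt hβ0)
    linarith [hmul, hexp]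
  · have h2 : ((dot p0.1 v).natAbs : ℤ) * p.2
        ≤ ((dot p0.1 v).natAbs : ℤ) * (dot p.1 w - (thr v p0 w + t) * dot p.1 v) := by
      linarith [hexp]
    exact le_of_mul_le_mul_left h2 hβ0

lemma scaled_pos {v : ι → ℤ} {p0 p : (ι → ℤ) × ℤ} (hs : 0 < dot p0.1 v) (w : ι → ℤ) (t : ℤ) :
    (p.2 ≤ dot p.1 (fun i => w i - (thr v p0 w + t) * v i)) ↔
      (((dot p0.1 v).natAbs : ℤ) * p.2 - dot p.1 v * p0.2
        - dot p.1 v * ((dot p0.1 w - p0.2) % ((dot p0.1 v).natAbs : ℤ))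
        + dot p.1 v * ((dot p0.1 v).natAbs : ℤ)
        + t * dot p.1 v * ((dot p0.1 v).natAbs : ℤ)
        ≤ dot (fun i => ((dot p0.1 v).natAbs : ℤ) * p.1 i + (-(dot p.1 v)) * p0.1 i) w) := by
  have hβ0 : (0:ℤ) < ((dot p0.1 v).natAbs : ℤ) := natAbs_pos_cast (by omega)
  rw [dot_sub_nsmul, dot_smul_add]
  have hml := thr_mul_pos hs w
  have hexp : ((dot p0.1 v).natAbs : ℤ) * (dot p.1 w - (thr v p0 w + t) * dot p.1 v)
      = (((dot p0.1 v).natAbs : ℤ) * dot p.1 w + (-(dot p.1 v)) * dot p0.1 w)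
        - (- (dot p.1 v * p0.2)
            - dot p.1 v * ((dot p0.1 w - p0.2) % ((dot p0.1 v).natAbs : ℤ))
            + dot p.1 v * ((dot p0.1 v).natAbs : ℤ)
            + t * dot p.1 v * ((dot p0.1 v).natAbs : ℤ)) := by
    linear_combination (-(dot p.1 v)) * hml
  constructor <;> intro h
  · have hmul := mul_le_mul_of_nonneg_left h (le_of_lt hβ0)
    linarith [hmul, hexp]
  · have h2 : ((dot p0.1 v).natAbs : ℤ) * p.2
        ≤ ((dot p0.1 v).natAbs : ℤ) * (dot p.1 w - (thr v p0 w + t) * dot p.1 v) := by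
      linarith [hexp]
    exact le_of_mul_le_mul_left h2 hβ0



lemma invClass_addNat (X : Set (ι → ℤ)) (v : ι → ℤ) (hX : InvClass X) :
    InvClass {y : ι → ℤ | ∃ n : ℕ, (fun j => y j - (n : ℤ) * v j) ∈ X} := by
  classical
  obtain ⟨P, m, hm, hP⟩ := hX
  set B : ℕ := P.sup (fun p => (dot p.1 v).natAbs) with hBdef
  set m' : ℕ := m * ∏ p ∈ P, max 1 (dot p.1 v).natAbs with hm'def
  have hm'pos : 0 < m' :=
    Nat.mul_pos hm (Finset.prod_pos fun p _ => lt_of_lt_of_le one_pos (le_max_left _ _))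
  have hmm' : (m : ℤ) ∣ (m' : ℤ) := by exact_mod_cast Dvd.intro _ rfl
  have hβmm' : ∀ p ∈ P, dot p.1 v ≠ 0 → (((dot p.1 v).natAbs : ℤ) * m) ∣ (m' : ℤ) := by
    intro p hp hne
    have h1 : (dot p.1 v).natAbs ∣ ∏ p ∈ P, max 1 (dot p.1 v).natAbs := by
      have h2 := Finset.dvd_prod_of_mem (fun p => max 1 (dot p.1 v).natAbs) hp
      exact dvd_trans (dvd_of_eq (max_eq_right (by omega)).symm) h2
    have h3 : ((dot p.1 v).natAbs * m) ∣ m' := by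
      rw [hm'def, mul_comm m]
      exact Nat.mul_dvd_mul h1 dvd_rfl
    exact_mod_cast h3
  set T1 : Finset ((ι → ℤ) × ℤ) := (P ×ˢ Finset.range m).image
    (fun pj => (pj.1.1, pj.1.2 + (pj.2 : ℤ) * dot pj.1.1 v)) with hT1def
  set T2 : Finset ((ι → ℤ) × ℤ) := (P ×ˢ Finset.range m).image
    (fun pj => (pj.1.1, pj.1.2 + ((dot pj.1.1 v).natAbs : ℤ) * (1 + (pj.2 : ℤ)))) with hT2def
  set T2' : Finset ((ι → ℤ) × ℤ) := (P ×ˢ Finset.range m).image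
    (fun pj => (pj.1.1, pj.1.2 + ((dot pj.1.1 v).natAbs : ℤ) * (-(pj.2 : ℤ) - 1))) with hT2'def
  set T3 : Finset ((ι → ℤ) × ℤ) :=
    ((P ×ˢ P) ×ˢ (Finset.range m ×ˢ Finset.range (B + 1))).image
    (fun x => ((fun i => ((dot x.1.1.1 v).natAbs : ℤ) * x.1.2.1 i + dot x.1.2.1 v * x.1.1.1 i),
      ((dot x.1.1.1 v).natAbs : ℤ) * x.1.2.2 + dot x.1.2.1 v * (x.2.2 : ℤ)
        + dot x.1.2.1 v * x.1.1.2
        + (x.2.1 : ℤ) * dot x.1.2.1 v * ((dot x.1.1.1 v).natAbs : ℤ))) with hT3def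
  set T3' : Finset ((ι → ℤ) × ℤ) :=
    ((P ×ˢ P) ×ˢ (Finset.range m ×ˢ Finset.range (B + 1))).image
    (fun x => ((fun i => ((dot x.1.1.1 v).natAbs : ℤ) * x.1.2.1 i + (-(dot x.1.2.1 v)) * x.1.1.1 i),
      ((dot x.1.1.1 v).natAbs : ℤ) * x.1.2.2 - dot x.1.2.1 v * x.1.1.2
        - dot x.1.2.1 v * (x.2.2 : ℤ)
        + dot x.1.2.1 v * ((dot x.1.1.1 v).natAbs : ℤ)
        + (x.2.1 : ℤ) * dot x.1.2.1 v * ((dot x.1.1.1 v).natAbs : ℤ))) with hT3'def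
  refine ⟨((((P ∪ T1) ∪ T2) ∪ T2') ∪ T3) ∪ T3', m', hm'pos, ?_⟩
  have hmemP : ∀ p ∈ P, p ∈ ((((P ∪ T1) ∪ T2) ∪ T2') ∪ T3) ∪ T3' := by
    intro p hp; simp only [Finset.mem_union]; tauto
  have hmemT1 : ∀ p ∈ T1, p ∈ ((((P ∪ T1) ∪ T2) ∪ T2') ∪ T3) ∪ T3' := by
    intro p hp; simp only [Finset.mem_union]; tauto
  have hmemT2 : ∀ p ∈ T2, p ∈ ((((P ∪ T1) ∪ T2) ∪ T2') ∪ T3) ∪ T3' := by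
    intro p hp; simp only [Finset.mem_union]; tauto
  have hmemT2' : ∀ p ∈ T2', p ∈ ((((P ∪ T1) ∪ T2) ∪ T2') ∪ T3) ∪ T3' := by
    intro p hp; simp only [Finset.mem_union]; tauto
  have hmemT3 : ∀ p ∈ T3, p ∈ ((((P ∪ T1) ∪ T2) ∪ T2') ∪ T3) ∪ T3' := by
    intro p hp; simp only [Finset.mem_union]; tauto
  have hmemT3' : ∀ p ∈ T3', p ∈ ((((P ∪ T1) ∪ T2) ∪ T2') ∪ T3) ∪ T3' := by
    intro p hp; simp only [Finset.mem_union]; tauto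
  have main : ∀ y z : ι → ℤ,
      (∀ p ∈ ((((P ∪ T1) ∪ T2) ∪ T2') ∪ T3) ∪ T3', (p.2 ≤ dot p.1 y ↔ p.2 ≤ dot p.1 z)) →
      (∀ j, (m' : ℤ) ∣ y j - z j) →
      (∃ n : ℕ, (fun j => y j - (n : ℤ) * v j) ∈ X) →
      (∃ n : ℕ, (fun j => z j - (n : ℤ) * v j) ∈ X) := by
    intro y z hiq hres hex
    have hφ : ∀ n n' : ℕ,
        (∀ l ∈ P.image (fun p => thr v p y), (l ≤ (n:ℤ) ↔ l ≤ (n':ℤ))) →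
        ((m:ℤ) ∣ (n:ℤ) - (n':ℤ)) →
        (((fun j => y j - (n:ℤ) * v j) ∈ X) ↔ ((fun j => y j - (n':ℤ) * v j) ∈ X)) := by
      intro n n' hL hD
      refine hP _ _ (fun p hp => ?_) (fun j => ?_)
      · rcases lt_trichotomy (dot p.1 v) 0 with hsn | hsn | hsn
        · rw [thr_char_neg hsn y (n:ℤ), thr_char_neg hsn y (n':ℤ)]
          exact hL _ (Finset.mem_image_of_mem _ hp)
        · rw [thr_char_zero hsn y (n:ℤ), thr_char_zero hsn y (n':ℤ)]
        · rw [thr_char_pos hsn y (n:ℤ), thr_char_pos hsn y (n':ℤ)]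
          exact not_congr (hL _ (Finset.mem_image_of_mem _ hp))
      · have he : (y j - (n:ℤ) * v j) - (y j - (n':ℤ) * v j) = ((n':ℤ) - (n:ℤ)) * v j := by
          ring
        rw [he]; exact ((dvd_sub_comm).mp hD).mul_right _
    obtain ⟨ns, hns, hcase⟩ := cooper (P.image fun p => thr v p y) m hm
      (fun n : ℕ => (fun j => y j - (n:ℤ) * v j) ∈ X) hφ hex
    by_cases hsm : ns < m
    · refine ⟨ns, (hP _ _ (fun p hp => ?_) (fun j => ?_)).mp hns⟩
      · have ey : (p.2 ≤ dot p.1 (fun j => y j - (ns:ℤ) * v j))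
            ↔ (p.2 + (ns:ℤ) * dot p.1 v ≤ dot p.1 y) := by
          rw [dot_sub_nsmul]; constructor <;> intro <;> linarith
        have ez : (p.2 ≤ dot p.1 (fun j => z j - (ns:ℤ) * v j))
            ↔ (p.2 + (ns:ℤ) * dot p.1 v ≤ dot p.1 z) := by
          rw [dot_sub_nsmul]; constructor <;> intro <;> linarith
        rw [ey, ez]
        exact hiq (p.1, p.2 + (ns:ℤ) * dot p.1 v)
          (hmemT1 _ (Finset.mem_image.mpr ⟨(p, ns),
            Finset.mem_product.mpr ⟨hp, Finset.mem_range.mpr hsm⟩, rfl⟩))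
      · have he : (y j - (ns:ℤ) * v j) - (z j - (ns:ℤ) * v j) = y j - z j := by ring
        rw [he]; exact dvd_trans hmm' (hres j)
    · obtain ⟨l, hlmem, j, hjm, hnl⟩ := hcase.resolve_left hsm
      obtain ⟨p0, hp0, rfl⟩ := Finset.mem_image.mp hlmem
      have hα0ne : dot p0.1 v ≠ 0 := by
        intro h0
        rw [thr, if_neg (by omega), if_neg (by omega)] at hnl
        omega
      have hβ0pos : (0:ℤ) < ((dot p0.1 v).natAbs : ℤ) := natAbs_pos_cast hα0ne
      have hdd : (((dot p0.1 v).natAbs : ℤ) * m)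
          ∣ ((dot p0.1 y - p0.2) - (dot p0.1 z - p0.2)) := by
        have h1 : (m':ℤ) ∣ (∑ i, p0.1 i * y i) - (∑ i, p0.1 i * z i) := dvd_dot_sub' hres p0.1
        have h2 := hβmm' p0 hp0 hα0ne
        have h3 : (dot p0.1 y - p0.2) - (dot p0.1 z - p0.2) = dot p0.1 y - dot p0.1 z := by ring
        rw [h3]; exact dvd_trans h2 h1
      obtain ⟨hthr_mod, hr_eq⟩ := ediv_transfer hβ0pos hdd
      have hthr_modm : (m:ℤ) ∣ thr v p0 y - thr v p0 z := by
        rcases lt_or_gt_of_ne hα0ne with hsn | hsn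
        · rw [thr, if_pos hsn, thr, if_pos hsn]
          have he : -((dot p0.1 y - p0.2) / ((dot p0.1 v).natAbs : ℤ))
              - -((dot p0.1 z - p0.2) / ((dot p0.1 v).natAbs : ℤ))
              = -((dot p0.1 y - p0.2) / ((dot p0.1 v).natAbs : ℤ)
                  - (dot p0.1 z - p0.2) / ((dot p0.1 v).natAbs : ℤ)) := by ring
          rw [he]; exact dvd_neg.mpr hthr_mod
        · rw [thr, if_neg (by omega), if_pos hsn, thr, if_neg (by omega), if_pos hsn]
          have he : (dot p0.1 y - p0.2) / ((dot p0.1 v).natAbs : ℤ) + 1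
              - ((dot p0.1 z - p0.2) / ((dot p0.1 v).natAbs : ℤ) + 1)
              = (dot p0.1 y - p0.2) / ((dot p0.1 v).natAbs : ℤ)
                  - (dot p0.1 z - p0.2) / ((dot p0.1 v).natAbs : ℤ) := by ring
          rw [he]; exact hthr_mod
      have hnsnn : (0:ℤ) ≤ thr v p0 y + (j:ℤ) := by
        rw [← hnl]; positivity
      have hthrz_nn : (0:ℤ) ≤ thr v p0 z + (j:ℤ) := by
        rcases lt_or_gt_of_ne hα0ne with hsn | hsn
        · have hy2 := (thr_ge_iff_neg hsn y (-(j:ℤ))).mp (by linarith)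
          have e1 : (1:ℤ) - -(j:ℤ) = 1 + (j:ℤ) := by ring
          rw [e1] at hy2
          have hiq2 := hiq (p0.1, p0.2 + ((dot p0.1 v).natAbs : ℤ) * (1 + (j:ℤ)))
            (hmemT2 _ (Finset.mem_image.mpr ⟨(p0, j),
              Finset.mem_product.mpr ⟨hp0, Finset.mem_range.mpr hjm⟩, rfl⟩))
          have hz2 : ¬ (p0.2 + ((dot p0.1 v).natAbs : ℤ) * (1 + (j:ℤ)) ≤ dot p0.1 z) :=
            fun hc => hy2 (hiq2.mpr hc)
          have hz3 := (thr_ge_iff_neg hsn z (-(j:ℤ))).mpr (by rw [e1]; exact hz2)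
          linarith
        · have hy2 := (thr_ge_iff_pos hsn y (-(j:ℤ))).mp (by linarith)
          have hiq2 := hiq (p0.1, p0.2 + ((dot p0.1 v).natAbs : ℤ) * (-(j:ℤ) - 1))
            (hmemT2' _ (Finset.mem_image.mpr ⟨(p0, j),
              Finset.mem_product.mpr ⟨hp0, Finset.mem_range.mpr hjm⟩, rfl⟩))
          have hz2 := hiq2.mp hy2
          have hz3 := (thr_ge_iff_pos hsn z (-(j:ℤ))).mpr hz2
          linarith
      have hnz : ((thr v p0 z + (j:ℤ)).toNat : ℤ) = thr v p0 z + (j:ℤ) :=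
        Int.toNat_of_nonneg hthrz_nn
      refine ⟨(thr v p0 z + (j:ℤ)).toNat, (hP _ _ (fun p hp => ?_) (fun i => ?_)).mp hns⟩
      · rw [hnl, hnz]
        rcases lt_or_gt_of_ne hα0ne with hsn | hsn
        · have hr0nn : 0 ≤ (dot p0.1 y - p0.2) % ((dot p0.1 v).natAbs : ℤ) :=
            Int.emod_nonneg _ (by omega)
          have hr0lt : (dot p0.1 y - p0.2) % ((dot p0.1 v).natAbs : ℤ)
              < ((dot p0.1 v).natAbs : ℤ) := Int.emod_lt_of_pos _ hβ0pos
          have hBle : (dot p0.1 v).natAbs ≤ B :=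
            hBdef ▸ Finset.le_sup (f := fun p => (dot p.1 v).natAbs) hp0
          have hrB : ((dot p0.1 y - p0.2) % ((dot p0.1 v).natAbs : ℤ)).toNat < B + 1 := by
            omega
          have hiq3 := hiq ((fun i => ((dot p0.1 v).natAbs : ℤ) * p.1 i + dot p.1 v * p0.1 i),
              ((dot p0.1 v).natAbs : ℤ) * p.2
                + dot p.1 v * ((dot p0.1 y - p0.2) % ((dot p0.1 v).natAbs : ℤ))
                + dot p.1 v * p0.2
                + (j:ℤ) * dot p.1 v * ((dot p0.1 v).natAbs : ℤ))
            (hmemT3 _ (Finset.mem_image.mpr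
              ⟨((p0, p), (j, ((dot p0.1 y - p0.2) % ((dot p0.1 v).natAbs : ℤ)).toNat)),
               Finset.mem_product.mpr ⟨Finset.mem_product.mpr ⟨hp0, hp⟩,
                 Finset.mem_product.mpr ⟨Finset.mem_range.mpr hjm, Finset.mem_range.mpr hrB⟩⟩,
               by simp only [Int.toNat_of_nonneg hr0nn]⟩))
          rw [scaled_neg hsn y (j:ℤ), scaled_neg hsn z (j:ℤ), ← hr_eq]
          exact hiq3
        · have hr0nn : 0 ≤ (dot p0.1 y - p0.2) % ((dot p0.1 v).natAbs : ℤ) :=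
            Int.emod_nonneg _ (by omega)
          have hr0lt : (dot p0.1 y - p0.2) % ((dot p0.1 v).natAbs : ℤ)
              < ((dot p0.1 v).natAbs : ℤ) := Int.emod_lt_of_pos _ hβ0pos
          have hBle : (dot p0.1 v).natAbs ≤ B :=
            hBdef ▸ Finset.le_sup (f := fun p => (dot p.1 v).natAbs) hp0
          have hrB : ((dot p0.1 y - p0.2) % ((dot p0.1 v).natAbs : ℤ)).toNat < B + 1 := by
            omega
          have hiq3 := hiq ((fun i => ((dot p0.1 v).natAbs : ℤ) * p.1 i + (-(dot p.1 v)) * p0.1 i),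
              ((dot p0.1 v).natAbs : ℤ) * p.2 - dot p.1 v * p0.2
                - dot p.1 v * ((dot p0.1 y - p0.2) % ((dot p0.1 v).natAbs : ℤ))
                + dot p.1 v * ((dot p0.1 v).natAbs : ℤ)
                + (j:ℤ) * dot p.1 v * ((dot p0.1 v).natAbs : ℤ))
            (hmemT3' _ (Finset.mem_image.mpr
              ⟨((p0, p), (j, ((dot p0.1 y - p0.2) % ((dot p0.1 v).natAbs : ℤ)).toNat)),
               Finset.mem_product.mpr ⟨Finset.mem_product.mpr ⟨hp0, hp⟩,
                 Finset.mem_product.mpr ⟨Finset.mem_range.mpr hjm, Finset.mem_range.mpr hrB⟩⟩,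
               by simp only [Int.toNat_of_nonneg hr0nn]⟩))
          rw [scaled_pos hsn y (j:ℤ), scaled_pos hsn z (j:ℤ), ← hr_eq]
          exact hiq3
      · rw [hnl, hnz]
        have he : (y i - (thr v p0 y + (j:ℤ)) * v i) - (z i - (thr v p0 z + (j:ℤ)) * v i)
            = (y i - z i) - (thr v p0 y - thr v p0 z) * v i := by ring
        rw [he]
        exact dvd_sub (dvd_trans hmm' (hres i)) (hthr_modm.mul_right _)
  intro y z hiq hres
  constructor
  · exact fun h => main y z hiq hres h
  · exact fun h => main z y (fun p hp => (hiq p hp).symm)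
      (fun j => (dvd_sub_comm).mp (hres j)) h
end SLAuxB

namespace SLAux
variable {ι : Type} [Fintype ι]

lemma invClass_linear_aux (x : ι → ℤ) (V : Finset (ι → ℤ)) :
    InvClass {y : ι → ℤ | ∃ c : (ι → ℤ) → ℕ, y = x + ∑ v ∈ V, (c v : ℤ) • v} := by
  classical
  induction V using Finset.induction_on with
  | empty =>
      have he : {y : ι → ℤ | ∃ c : (ι → ℤ) → ℕ, y = x + ∑ v ∈ (∅ : Finset (ι → ℤ)), (c v : ℤ) • v}
          = ({x} : Set (ι → ℤ)) := by
        ext y; simp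
      rw [he]; exact invClass_singleton x
  | @insert v0 V hv0 ih =>
      have he : {y : ι → ℤ | ∃ c : (ι → ℤ) → ℕ, y = x + ∑ v ∈ insert v0 V, (c v : ℤ) • v}
          = {y : ι → ℤ | ∃ n : ℕ,
              (fun j => y j - (n : ℤ) * v0 j) ∈
                {y : ι → ℤ | ∃ c : (ι → ℤ) → ℕ, y = x + ∑ v ∈ V, (c v : ℤ) • v}} := by
        ext y
        constructor
        · rintro ⟨c, rfl⟩
          refine ⟨c v0, ⟨c, ?_⟩⟩
          funext j
          simp only [Pi.add_apply, Finset.sum_apply, Pi.smul_apply, smul_eq_mul,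
            Finset.sum_insert hv0]
          ring
        · rintro ⟨n, c', hc'⟩
          refine ⟨fun u => if u = v0 then n else c' u, ?_⟩
          funext j
          have hj := congrFun hc' j
          simp only [Pi.add_apply, Finset.sum_apply, Pi.smul_apply, smul_eq_mul] at hj
          simp only [Pi.add_apply, Finset.sum_apply, Pi.smul_apply, smul_eq_mul,
            Finset.sum_insert hv0, if_pos rfl]
          have hsum : ∑ v ∈ V, ((if v = v0 then (n:ℤ) else (c' v : ℤ))) * v j
              = ∑ v ∈ V, (c' v : ℤ) * v j := by
            refine Finset.sum_congr rfl fun v hv => ?_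
            rw [if_neg (by rintro rfl; exact hv0 hv)]
          push_cast
          rw [hsum]
          linarith
      rw [he]
      exact SLAuxB.invClass_addNat _ v0 ih

lemma invClass_of_linear {S : Set (ι → ℤ)} (hS : IsLinearSetZd S) : InvClass S := by
  obtain ⟨x, V, rfl⟩ := hS
  exact invClass_linear_aux x V

lemma invClass_of_semilinear {S : Set (ι → ℤ)} (hS : IsSemilinearSetZd S) : InvClass S := by
  classical
  obtain ⟨F, hF, rfl⟩ := hS
  induction F using Finset.induction_on with
  | empty => simpa using invClass_empty
  | @insert T F hT ih =>
      rw [Finset.set_biUnion_insert]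
      exact invClass_union (invClass_of_linear (hF T (Finset.mem_insert_self T F)))
        (ih fun U hU => hF U (Finset.mem_insert_of_mem hU))

end SLAux
namespace SLAux
variable {ι : Type} [Fintype ι]

variable {ι : Type} [Fintype ι]

lemma rat_to_int_kernel {D : ℕ} (g : Fin D → (ι → ℤ)) (u : Fin D → ℚ)
    (hu : u ≠ 0) (h : ∀ i, ∑ j, u j * (g j i : ℚ) = 0) :
    ∃ w : Fin D → ℤ, w ≠ 0 ∧ ∀ i, ∑ j, w j * g j i = 0 := by
  classical
  set N : ℕ := ∏ j, (u j).den with hNdef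
  have hNpos : 0 < N := Finset.prod_pos fun j _ => (u j).pos
  have hdvd : ∀ j, ((u j).den : ℤ) ∣ (N : ℤ) := fun j => by
    exact_mod_cast Finset.dvd_prod_of_mem (fun j => (u j).den) (Finset.mem_univ j)
  set t : Fin D → ℤ := fun j => (N : ℤ) / ((u j).den : ℤ) with htdef
  have ht : ∀ j, ((u j).den : ℤ) * t j = (N : ℤ) := fun j =>
    Int.mul_ediv_cancel' (hdvd j)
  have htpos : ∀ j, 0 < t j := by
    intro j
    have h1 : (0:ℤ) < N := by exact_mod_cast hNpos
    have h2 : (0:ℤ) < ((u j).den : ℤ) := by exact_mod_cast (u j).pos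
    nlinarith [ht j]
  set w : Fin D → ℤ := fun j => (u j).num * t j with hwdef
  have hq : ∀ j, (u j) * ((u j).den : ℚ) = ((u j).num : ℚ) := fun j => by
    rw [Rat.mul_den_eq_num]
  have hcast : ∀ j, ((w j : ℤ) : ℚ) = u j * (N : ℚ) := by
    intro j
    have hNq : (N : ℚ) = ((u j).den : ℚ) * ((t j : ℤ) : ℚ) := by exact_mod_cast (ht j).symm
    have h2 : w j = (u j).num * t j := rfl
    rw [h2]
    push_cast
    rw [← hq j, hNq]
    ring
  refine ⟨w, ?_, ?_⟩
  · obtain ⟨j, hj⟩ := Function.ne_iff.mp hu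
    intro hw0
    have : w j = 0 := congrFun hw0 j
    rw [hwdef] at this
    simp only at this
    rcases mul_eq_zero.mp this with h1 | h1
    · exact hj (by simpa using Rat.num_eq_zero.mp h1)
    · exact absurd h1 (ne_of_gt (htpos j))
  · intro i
    have : ((∑ j, w j * g j i : ℤ) : ℚ) = 0 := by
      push_cast
      calc ∑ j, ((w j : ℤ):ℚ) * (g j i : ℚ) = ∑ j, (u j * (N:ℚ)) * (g j i : ℚ) := by
            refine Finset.sum_congr rfl fun j _ => ?_
            rw [hcast j]
          _ = (N:ℚ) * ∑ j, u j * (g j i : ℚ) := by rw [Finset.mul_sum]; congr 1; funext j; ring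
          _ = 0 := by rw [h i, mul_zero]
    exact_mod_cast this

lemma left_inverse_bound {D : ℕ} (g : Fin D → (ι → ℤ))
    (hker : ∀ u : Fin D → ℤ, (∀ i, ∑ j, u j * g j i = 0) → u = 0) :
    ∃ Cb : ℕ, ∀ (x : Fin D → ℤ) (s : ℕ), (∀ i, (∑ j, x j * g j i).natAbs ≤ s) →
      ∀ j, (x j).natAbs ≤ Cb * s := by
  classical
  set A : (Fin D → ℚ) →ₗ[ℚ] (ι → ℚ) :=
    { toFun := fun x => fun i => ∑ j, x j * (g j i : ℚ)
      map_add' := by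
        intro a b; funext i
        simp only [Pi.add_apply, add_mul, Finset.sum_add_distrib]
      map_smul' := by
        intro c a; funext i
        simp only [Pi.smul_apply, smul_eq_mul, RingHom.id_apply, Finset.mul_sum, mul_assoc] } with hAdef
  have hAinj : LinearMap.ker A = ⊥ := by
    rw [LinearMap.ker_eq_bot']
    intro u hu
    by_contra hne
    have hu' : ∀ i, ∑ j, u j * (g j i : ℚ) = 0 := fun i => congrFun hu i
    obtain ⟨w, hw0, hwk⟩ := rat_to_int_kernel g u hne hu'
    exact hw0 (hker w hwk)
  obtain ⟨Binv, hB⟩ := A.exists_leftInverse_of_injective hAinj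
  -- standard basis vectors of ι → ℚ
  set e : ι → (ι → ℚ) := fun i => fun i' => if i = i' then 1 else 0 with hedef
  -- bound constant
  obtain ⟨Cb, hCb⟩ := exists_nat_ge (∑ j, ∑ i, |Binv (e i) j|)
  refine ⟨Cb, fun x s hx j => ?_⟩
  have hxq : (fun j => (x j : ℚ)) = Binv (A (fun j => (x j : ℚ))) := by
    have := congrFun (congrArg DFunLike.coe hB) (fun j => (x j : ℚ))
    simpa using this.symm
  have hdecomp : ∀ w : ι → ℚ, Binv w = ∑ i, w i • Binv (e i) := by
    intro w
    conv_lhs => rw [pi_eq_sum_univ w]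
    rw [map_sum]
    refine Finset.sum_congr rfl fun i _ => ?_
    rw [map_smul]
  have hxj : (x j : ℚ) = ∑ i, (A (fun j => (x j : ℚ))) i * (Binv (e i) j) := by
    conv_lhs => rw [show (x j : ℚ) = (fun j => (x j : ℚ)) j from rfl, hxq]
    rw [hdecomp]
    simp [Finset.sum_apply]
  have hAval : ∀ i, |(A (fun j => (x j : ℚ))) i| ≤ (s : ℚ) := by
    intro i
    have h1 : (A (fun j => (x j : ℚ))) i = ((∑ j, x j * g j i : ℤ) : ℚ) := by
      simp only [hAdef, LinearMap.coe_mk, AddHom.coe_mk]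
      push_cast; rfl
    rw [h1]
    rw [show |((∑ j, x j * g j i : ℤ) : ℚ)| = (((∑ j, x j * g j i : ℤ).natAbs : ℕ) : ℚ) by
      push_cast [Nat.cast_natAbs]; simp]
    exact_mod_cast hx i
  have hbound : |(x j : ℚ)| ≤ (Cb : ℚ) * s := by
    rw [hxj]
    calc |∑ i, (A (fun j => (x j : ℚ))) i * (Binv (e i) j)|
        ≤ ∑ i, |(A (fun j => (x j : ℚ))) i * (Binv (e i) j)| := Finset.abs_sum_le_sum_abs _ _
      _ ≤ ∑ i, (s : ℚ) * |Binv (e i) j| := by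
          refine Finset.sum_le_sum fun i _ => ?_
          rw [abs_mul]
          exact mul_le_mul_of_nonneg_right (hAval i) (abs_nonneg _)
      _ = (∑ i, |Binv (e i) j|) * s := by
          rw [Finset.sum_mul]
          exact Finset.sum_congr rfl fun i _ => mul_comm _ _
      _ ≤ (Cb : ℚ) * s := by
          refine mul_le_mul_of_nonneg_right ?_ (by positivity)
          refine le_trans ?_ hCb
          refine Finset.single_le_sum (f := fun j => ∑ i, |Binv (e i) j|)
            (fun j _ => by positivity) (Finset.mem_univ j)
  have : ((x j).natAbs : ℚ) ≤ ((Cb * s : ℕ) : ℚ) := by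
    push_cast [Nat.cast_natAbs] at hbound ⊢
    exact hbound
  exact_mod_cast this



lemma ncard_biUnion_le {α β : Type*} (s : Finset α) (f : α → Set β) :
    (⋃ a ∈ s, f a).ncard ≤ ∑ a ∈ s, (f a).ncard := by
  classical
  induction s using Finset.induction_on with
  | empty => simp
  | @insert a s ha ih =>
      rw [Finset.set_biUnion_insert, Finset.sum_insert ha]
      exact le_trans (Set.ncard_union_le _ _) (Nat.add_le_add_left ih _)

variable {ι : Type} [Fintype ι]

lemma box_finite (s : ℕ) : {y : ι → ℤ | ∀ i, (y i).natAbs ≤ s}.Finite := by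
  classical
  refine Set.Finite.subset (Finset.finite_toSet
    (Fintype.piFinset fun _ : ι => Finset.Icc (-(s:ℤ)) (s:ℤ))) ?_
  intro y hy
  simp only [Finset.coe_sort_coe, Finset.mem_coe, Fintype.mem_piFinset, Finset.mem_Icc]
  intro i
  have := hy i
  omega

lemma count_box : ∀ (D : ℕ) {ι : Type} [Fintype ι] (g : Fin D → (ι → ℤ)),
    ∃ C : ℕ, 0 < C ∧ ∀ s : ℕ,
      {y : ι → ℤ | (∃ x : Fin D → ℤ, y = fun i => ∑ j, x j * g j i) ∧
        ∀ i, (y i).natAbs ≤ s}.ncard ≤ C * (s + 1) ^ D := by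
  intro D
  induction D with
  | zero =>
      intro ι _ g
      refine ⟨1, one_pos, fun s => ?_⟩
      have hsub : {y : ι → ℤ | (∃ x : Fin 0 → ℤ, y = fun i => ∑ j, x j * g j i) ∧
          ∀ i, (y i).natAbs ≤ s} ⊆ {fun _ => 0} := by
        rintro y ⟨⟨x, rfl⟩, -⟩
        simp only [Set.mem_singleton_iff]
        funext i
        simp
      calc _ ≤ ({fun _ => (0:ℤ)} : Set (ι → ℤ)).ncard :=
              Set.ncard_le_ncard hsub (Set.finite_singleton _)
        _ = 1 := Set.ncard_singleton _
        _ ≤ 1 * (s+1)^0 := by simp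
  | succ D ih =>
      intro ι _ g
      by_cases hker : ∃ u : Fin (D+1) → ℤ, u ≠ 0 ∧ ∀ i, ∑ j, u j * g j i = 0
      · -- kernel case: reduce to dimension D
        obtain ⟨u, hu0, huk⟩ := hker
        obtain ⟨j0, hj0t⟩ := Function.ne_iff.mp hu0
        have hj0 : u j0 ≠ 0 := by simpa using hj0t
        set u1 : Fin (D+1) → ℤ := if 0 < u j0 then u else -u with hu1def
        have hu1k : ∀ i, ∑ j, u1 j * g j i = 0 := by
          intro i
          by_cases hpos : 0 < u j0
          · rw [hu1def, if_pos hpos]; exact huk i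
          · rw [hu1def, if_neg hpos]
            have : ∑ j, (-u) j * g j i = -∑ j, u j * g j i := by
              rw [← Finset.sum_neg_distrib]
              exact Finset.sum_congr rfl fun j _ => by simp [neg_mul]
            rw [this, huk i, neg_zero]
        have hb0 : 0 < u1 j0 := by
          by_cases hpos : 0 < u j0
          · rw [hu1def, if_pos hpos]; exact hpos
          · rw [hu1def, if_neg hpos]; simp only [Pi.neg_apply]; omega
        set E : ℕ := (u1 j0).toNat with hEdef
        have hE1 : 1 ≤ E := by omega
        set g' : Fin D → (ι → ℤ) := fun j => g (j0.succAbove j) with hg'def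
        obtain ⟨C', hC'pos, hC'⟩ := ih g'
        set G : ℕ := Finset.univ.sup fun i => (g j0 i).natAbs with hGdef
        refine ⟨E * C' * (E * G + 1) ^ D, by positivity, fun s => ?_⟩
        -- subset of a union over e < E
        set T : ℕ → Set (ι → ℤ) := fun e =>
          {y : ι → ℤ | (∃ x' : Fin D → ℤ,
            (fun i => y i - (e:ℤ) * g j0 i) = fun i => ∑ j, x' j * g' j i) ∧
            ∀ i, (y i).natAbs ≤ s} with hTdef
        have hsub : {y : ι → ℤ | (∃ x : Fin (D+1) → ℤ, y = fun i => ∑ j, x j * g j i) ∧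
            ∀ i, (y i).natAbs ≤ s} ⊆ ⋃ e ∈ Finset.range E, T e := by
          rintro y ⟨⟨x, rfl⟩, hbox⟩
          set x2 : Fin (D+1) → ℤ := fun j => x j - (x j0 / u1 j0) * u1 j with hx2def
          have hx2sum : ∀ i, ∑ j, x2 j * g j i = ∑ j, x j * g j i := by
            intro i
            have h1 : ∀ j, x2 j * g j i = x j * g j i - (x j0 / u1 j0) * (u1 j * g j i) := by
              intro j; rw [hx2def]; ring
            rw [Finset.sum_congr rfl fun j _ => h1 j, Finset.sum_sub_distrib,
              ← Finset.mul_sum, hu1k i, mul_zero, sub_zero]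
          have hx2j0 : x2 j0 = x j0 % u1 j0 := by
            rw [hx2def]
            simp only []
            rw [Int.emod_def]; ring
          have hx2nn : 0 ≤ x2 j0 := by
            rw [hx2j0]; exact Int.emod_nonneg _ (by omega)
          have hx2lt : x2 j0 < u1 j0 := by
            rw [hx2j0]; exact Int.emod_lt_of_pos _ hb0
          refine Set.mem_biUnion (Finset.mem_range.mpr (show (x2 j0).toNat < E by omega)) ?_
          refine ⟨⟨fun j => x2 (j0.succAbove j), ?_⟩, hbox⟩
          funext i
          have hsplit := Fin.sum_univ_succAbove (fun j => x2 j * g j i) j0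
          have : ∑ j, x j * g j i = x2 j0 * g j0 i + ∑ j : Fin D, x2 (j0.succAbove j) * g' j i := by
            rw [← hx2sum i, hsplit, hg'def]
          simp only [Pi.sub_apply]
          rw [this, Int.toNat_of_nonneg hx2nn]
          ring
        have hTcount : ∀ e ∈ Finset.range E, (T e).ncard ≤ C' * (s + E * G + 1) ^ D := by
          intro e he
          have hinj : Set.InjOn (fun y => fun i => y i - (e:ℤ) * g j0 i) (T e) := by
            intro y1 h1 y2 h2 heq
            funext i
            have := congrFun heq i
            simpa using this
          have hmaps : ∀ y ∈ T e, (fun i => y i - (e:ℤ) * g j0 i) ∈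
              {y : ι → ℤ | (∃ x : Fin D → ℤ, y = fun i => ∑ j, x j * g' j i) ∧
                ∀ i, (y i).natAbs ≤ s + E * G} := by
            rintro y ⟨⟨x', hx'⟩, hbox⟩
            refine ⟨⟨x', hx'⟩, fun i => ?_⟩
            show (y i - (e:ℤ) * g j0 i).natAbs ≤ s + E * G
            have h1 : (y i).natAbs ≤ s := hbox i
            have h2 : (g j0 i).natAbs ≤ G :=
              hGdef ▸ Finset.le_sup (f := fun i => (g j0 i).natAbs) (Finset.mem_univ i)
            have h3 : e < E := Finset.mem_range.mp he
            have h4 : ((e:ℤ) * g j0 i).natAbs = e * (g j0 i).natAbs := by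
              rw [Int.natAbs_mul]; simp
            have : (y i - (e:ℤ) * g j0 i).natAbs ≤ (y i).natAbs + ((e:ℤ) * g j0 i).natAbs := by
              omega
            have h5 : e * (g j0 i).natAbs ≤ E * G :=
              Nat.mul_le_mul (le_of_lt h3) h2
            omega
          refine le_trans (Set.ncard_le_ncard_of_injOn _ hmaps hinj
            (Set.Finite.subset (box_finite (s + E * G)) (fun y hy => hy.2))) (hC' (s + E * G))
        calc {y : ι → ℤ | (∃ x : Fin (D+1) → ℤ, y = fun i => ∑ j, x j * g j i) ∧
              ∀ i, (y i).natAbs ≤ s}.ncard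
            ≤ (⋃ e ∈ Finset.range E, T e).ncard := by
              refine Set.ncard_le_ncard hsub ?_
              refine Set.Finite.biUnion (Finset.finite_toSet _) fun e _ =>
                Set.Finite.subset (box_finite s) (fun y hy => hy.2)
          _ ≤ ∑ e ∈ Finset.range E, (T e).ncard := ncard_biUnion_le _ _
          _ ≤ ∑ e ∈ Finset.range E, C' * (s + E * G + 1) ^ D :=
              Finset.sum_le_sum hTcount
          _ = E * (C' * (s + E * G + 1) ^ D) := by
              rw [Finset.sum_const, Finset.card_range]; ring
          _ ≤ E * C' * (E * G + 1) ^ D * (s + 1) ^ (D+1) := by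
              have h1 : s + E * G + 1 ≤ (E * G + 1) * (s + 1) := by
                calc s + E * G + 1 ≤ E * G * s + (s + E * G + 1) := Nat.le_add_left _ _
                  _ = (E * G + 1) * (s + 1) := by ring
              have h2 : (s + E * G + 1)^D ≤ ((E * G + 1) * (s+1))^D :=
                Nat.pow_le_pow_left h1 D
              rw [mul_pow] at h2
              calc E * (C' * (s + E * G + 1) ^ D)
                  ≤ E * (C' * ((E * G + 1)^D * (s+1)^D)) := by
                    exact Nat.mul_le_mul_left _ (Nat.mul_le_mul_left _ h2)
                _ ≤ E * C' * (E * G + 1) ^ D * (s + 1) ^ (D+1) := by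
                    have h3 : (s+1)^D ≤ (s+1)^(D+1) :=
                      Nat.pow_le_pow_right (by omega) (by omega)
                    calc E * (C' * ((E * G + 1)^D * (s+1)^D))
                        = E * C' * (E * G + 1)^D * (s+1)^D := by ring
                      _ ≤ E * C' * (E * G + 1)^D * (s+1)^(D+1) :=
                          Nat.mul_le_mul_left _ h3
      · -- injective case
        have hker' : ∀ u : Fin (D+1) → ℤ, (∀ i, ∑ j, u j * g j i = 0) → u = 0 := by
          intro u hu
          by_contra hne
          exact hker ⟨u, hne, hu⟩
        obtain ⟨Cb, hCb⟩ := left_inverse_bound g hker'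
        refine ⟨(2 * Cb + 1) ^ (D + 1), by positivity, fun s => ?_⟩
        set S := {y : ι → ℤ | (∃ x : Fin (D+1) → ℤ, y = fun i => ∑ j, x j * g j i) ∧
          ∀ i, (y i).natAbs ≤ s} with hSdef
        set f : (ι → ℤ) → (Fin (D+1) → ℤ) := fun y =>
          if h : ∃ x : Fin (D+1) → ℤ, y = fun i => ∑ j, x j * g j i
          then Classical.choose h else 0 with hfdef
        have hfspec : ∀ y ∈ S, y = fun i => ∑ j, (f y) j * g j i := by
          rintro y ⟨hex, -⟩
          rw [hfdef]
          simp only [dif_pos hex]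
          exact Classical.choose_spec hex
        have hinj : Set.InjOn f S := by
          intro y1 h1 y2 h2 heq
          rw [hfspec y1 h1, hfspec y2 h2, heq]
        set tgt : Finset (Fin (D+1) → ℤ) :=
          Fintype.piFinset (fun _ : Fin (D+1) =>
            Finset.Icc (-((Cb * s : ℕ) : ℤ)) ((Cb * s : ℕ) : ℤ)) with htgt
        have hmaps : ∀ y ∈ S, f y ∈ (tgt : Set (Fin (D+1) → ℤ)) := by
          intro y hy
          have hbox : ∀ i, (∑ j, (f y) j * g j i).natAbs ≤ s := by
            intro i
            have := hy.2 i
            rw [hfspec y hy] at this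
            exact this
          have hb := hCb (f y) s hbox
          simp only [htgt, Finset.coe_sort_coe, Finset.mem_coe, Fintype.mem_piFinset,
            Finset.mem_Icc]
          intro j
          have := hb j
          omega
        calc S.ncard ≤ (tgt : Set (Fin (D+1) → ℤ)).ncard :=
              Set.ncard_le_ncard_of_injOn f hmaps hinj (Finset.finite_toSet _)
          _ = tgt.card := Set.ncard_coe_finset _
          _ = (2 * (Cb * s) + 1) ^ (D + 1) := by
              rw [htgt, Fintype.card_piFinset]
              have hcard : (Finset.Icc (-((Cb * s : ℕ) : ℤ)) ((Cb * s : ℕ) : ℤ)).card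
                  = 2 * (Cb * s) + 1 := by
                rw [Int.card_Icc]
                omega
              rw [Finset.prod_congr rfl fun _ _ => hcard, Finset.prod_const,
                Finset.card_univ, Fintype.card_fin]
          _ ≤ ((2 * Cb + 1) * (s + 1)) ^ (D + 1) := by
              refine Nat.pow_le_pow_left ?_ _
              calc 2 * (Cb * s) + 1 ≤ (2 * Cb + s) + (2 * (Cb * s) + 1) := Nat.le_add_left _ _
                _ = (2 * Cb + 1) * (s + 1) := by ring
          _ = (2 * Cb + 1) ^ (D + 1) * (s + 1) ^ (D + 1) := by rw [mul_pow]

lemma count_box_ker {D : ℕ} {ι : Type} [Fintype ι] (g : Fin (D+1) → (ι → ℤ))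
    (u : Fin (D+1) → ℤ) (hu0 : u ≠ 0) (huk : ∀ i, ∑ j, u j * g j i = 0) :
    ∃ C : ℕ, 0 < C ∧ ∀ s : ℕ,
      {y : ι → ℤ | (∃ x : Fin (D+1) → ℤ, y = fun i => ∑ j, x j * g j i) ∧
        ∀ i, (y i).natAbs ≤ s}.ncard ≤ C * (s + 1) ^ D := by
    obtain ⟨j0, hj0t⟩ := Function.ne_iff.mp hu0
    have hj0 : u j0 ≠ 0 := by simpa using hj0t
    set u1 : Fin (D+1) → ℤ := if 0 < u j0 then u else -u with hu1def
    have hu1k : ∀ i, ∑ j, u1 j * g j i = 0 := by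
      intro i
      by_cases hpos : 0 < u j0
      · rw [hu1def, if_pos hpos]; exact huk i
      · rw [hu1def, if_neg hpos]
        have : ∑ j, (-u) j * g j i = -∑ j, u j * g j i := by
          rw [← Finset.sum_neg_distrib]
          exact Finset.sum_congr rfl fun j _ => by simp [neg_mul]
        rw [this, huk i, neg_zero]
    have hb0 : 0 < u1 j0 := by
      by_cases hpos : 0 < u j0
      · rw [hu1def, if_pos hpos]; exact hpos
      · rw [hu1def, if_neg hpos]; simp only [Pi.neg_apply]; omega
    set E : ℕ := (u1 j0).toNat with hEdef
    have hE1 : 1 ≤ E := by omega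
    set g' : Fin D → (ι → ℤ) := fun j => g (j0.succAbove j) with hg'def
    obtain ⟨C', hC'pos, hC'⟩ := count_box D g'
    set G : ℕ := Finset.univ.sup fun i => (g j0 i).natAbs with hGdef
    refine ⟨E * C' * (E * G + 1) ^ D, by positivity, fun s => ?_⟩
    -- subset of a union over e < E
    set T : ℕ → Set (ι → ℤ) := fun e =>
      {y : ι → ℤ | (∃ x' : Fin D → ℤ,
        (fun i => y i - (e:ℤ) * g j0 i) = fun i => ∑ j, x' j * g' j i) ∧
        ∀ i, (y i).natAbs ≤ s} with hTdef
    have hsub : {y : ι → ℤ | (∃ x : Fin (D+1) → ℤ, y = fun i => ∑ j, x j * g j i) ∧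
        ∀ i, (y i).natAbs ≤ s} ⊆ ⋃ e ∈ Finset.range E, T e := by
      rintro y ⟨⟨x, rfl⟩, hbox⟩
      set x2 : Fin (D+1) → ℤ := fun j => x j - (x j0 / u1 j0) * u1 j with hx2def
      have hx2sum : ∀ i, ∑ j, x2 j * g j i = ∑ j, x j * g j i := by
        intro i
        have h1 : ∀ j, x2 j * g j i = x j * g j i - (x j0 / u1 j0) * (u1 j * g j i) := by
          intro j; rw [hx2def]; ring
        rw [Finset.sum_congr rfl fun j _ => h1 j, Finset.sum_sub_distrib,
          ← Finset.mul_sum, hu1k i, mul_zero, sub_zero]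
      have hx2j0 : x2 j0 = x j0 % u1 j0 := by
        rw [hx2def]
        simp only []
        rw [Int.emod_def]; ring
      have hx2nn : 0 ≤ x2 j0 := by
        rw [hx2j0]; exact Int.emod_nonneg _ (by omega)
      have hx2lt : x2 j0 < u1 j0 := by
        rw [hx2j0]; exact Int.emod_lt_of_pos _ hb0
      refine Set.mem_biUnion (Finset.mem_range.mpr (show (x2 j0).toNat < E by omega)) ?_
      refine ⟨⟨fun j => x2 (j0.succAbove j), ?_⟩, hbox⟩
      funext i
      have hsplit := Fin.sum_univ_succAbove (fun j => x2 j * g j i) j0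
      have : ∑ j, x j * g j i = x2 j0 * g j0 i + ∑ j : Fin D, x2 (j0.succAbove j) * g' j i := by
        rw [← hx2sum i, hsplit, hg'def]
      simp only [Pi.sub_apply]
      rw [this, Int.toNat_of_nonneg hx2nn]
      ring
    have hTcount : ∀ e ∈ Finset.range E, (T e).ncard ≤ C' * (s + E * G + 1) ^ D := by
      intro e he
      have hinj : Set.InjOn (fun y => fun i => y i - (e:ℤ) * g j0 i) (T e) := by
        intro y1 h1 y2 h2 heq
        funext i
        have := congrFun heq i
        simpa using this
      have hmaps : ∀ y ∈ T e, (fun i => y i - (e:ℤ) * g j0 i) ∈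
          {y : ι → ℤ | (∃ x : Fin D → ℤ, y = fun i => ∑ j, x j * g' j i) ∧
            ∀ i, (y i).natAbs ≤ s + E * G} := by
        rintro y ⟨⟨x', hx'⟩, hbox⟩
        refine ⟨⟨x', hx'⟩, fun i => ?_⟩
        show (y i - (e:ℤ) * g j0 i).natAbs ≤ s + E * G
        have h1 : (y i).natAbs ≤ s := hbox i
        have h2 : (g j0 i).natAbs ≤ G :=
          hGdef ▸ Finset.le_sup (f := fun i => (g j0 i).natAbs) (Finset.mem_univ i)
        have h3 : e < E := Finset.mem_range.mp he
        have h4 : ((e:ℤ) * g j0 i).natAbs = e * (g j0 i).natAbs := by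
          rw [Int.natAbs_mul]; simp
        have : (y i - (e:ℤ) * g j0 i).natAbs ≤ (y i).natAbs + ((e:ℤ) * g j0 i).natAbs := by
          omega
        have h5 : e * (g j0 i).natAbs ≤ E * G :=
          Nat.mul_le_mul (le_of_lt h3) h2
        omega
      refine le_trans (Set.ncard_le_ncard_of_injOn _ hmaps hinj
        (Set.Finite.subset (box_finite (s + E * G)) (fun y hy => hy.2))) (hC' (s + E * G))
    calc {y : ι → ℤ | (∃ x : Fin (D+1) → ℤ, y = fun i => ∑ j, x j * g j i) ∧
          ∀ i, (y i).natAbs ≤ s}.ncard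
        ≤ (⋃ e ∈ Finset.range E, T e).ncard := by
          refine Set.ncard_le_ncard hsub ?_
          refine Set.Finite.biUnion (Finset.finite_toSet _) fun e _ =>
            Set.Finite.subset (box_finite s) (fun y hy => hy.2)
      _ ≤ ∑ e ∈ Finset.range E, (T e).ncard := ncard_biUnion_le _ _
      _ ≤ ∑ e ∈ Finset.range E, C' * (s + E * G + 1) ^ D :=
          Finset.sum_le_sum hTcount
      _ = E * (C' * (s + E * G + 1) ^ D) := by
          rw [Finset.sum_const, Finset.card_range]; ring
      _ ≤ E * C' * (E * G + 1) ^ D * (s + 1) ^ D := by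
          have h1 : s + E * G + 1 ≤ (E * G + 1) * (s + 1) := by
            calc s + E * G + 1 ≤ E * G * s + (s + E * G + 1) := Nat.le_add_left _ _
              _ = (E * G + 1) * (s + 1) := by ring
          have h2 : (s + E * G + 1)^D ≤ ((E * G + 1) * (s+1))^D :=
            Nat.pow_le_pow_left h1 D
          rw [mul_pow] at h2
          calc E * (C' * (s + E * G + 1) ^ D)
              ≤ E * (C' * ((E * G + 1)^D * (s+1)^D)) := by
                exact Nat.mul_le_mul_left _ (Nat.mul_le_mul_left _ h2)
            _ = E * C' * (E * G + 1)^D * (s+1)^D := by ring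


variable {ι : Type} [Fintype ι]

def dot' (a y : ι → ℤ) : ℤ := ∑ j, a j * y j

lemma clamp_works (K s t : ℤ) (h1 : -K ≤ t) (h2 : t ≤ K) :
    (s ≤ t ↔ max (-K) (min s (K+1)) ≤ t) := by omega

lemma fin3_cases (a : Fin 3) : a = 0 ∨ a = 1 ∨ a = 2 := by
  fin_cases a <;> simp

lemma dot_sub' (a x x' : ι → ℤ) :
    (∑ j, a j * (x j - x' j)) = (∑ j, a j * x j) - (∑ j, a j * x' j) := by
  rw [← Finset.sum_sub_distrib]
  exact Finset.sum_congr rfl fun j _ => by ring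

lemma pair_box_finite {κ1 κ2 : Type} [Fintype κ1] [Fintype κ2]
    (lo1 hi1 : κ1 → ℤ) (lo2 hi2 : κ2 → ℤ) :
    {t : (κ1 → ℤ) × (κ2 → ℤ) | (∀ k, lo1 k ≤ t.1 k ∧ t.1 k ≤ hi1 k) ∧
      (∀ k, lo2 k ≤ t.2 k ∧ t.2 k ≤ hi2 k)}.Finite := by
  classical
  refine Set.Finite.subset (Set.Finite.prod
    (Finset.finite_toSet (Fintype.piFinset fun k : κ1 => Finset.Icc (lo1 k) (hi1 k)))
    (Finset.finite_toSet (Fintype.piFinset fun k : κ2 => Finset.Icc (lo2 k) (hi2 k)))) ?_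
  rintro ⟨t1, t2⟩ ⟨h1, h2⟩
  constructor
  · simp only [Finset.coe_sort_coe, Finset.mem_coe, Fintype.mem_piFinset, Finset.mem_Icc]
    exact fun k => ⟨(h1 k).1, (h1 k).2⟩
  · simp only [Finset.coe_sort_coe, Finset.mem_coe, Fintype.mem_piFinset, Finset.mem_Icc]
    exact fun k => ⟨(h2 k).1, (h2 k).2⟩

lemma abs_dot_le (a : ι → ℤ) (wc : ι → ℤ) (n : ℕ) (hw : ∀ i, 0 ≤ wc i ∧ wc i ≤ (n:ℤ)) :
    |∑ j, a j * wc j| ≤ ((∑ j, (a j).natAbs : ℕ) : ℤ) * n := by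
  calc |∑ j, a j * wc j| ≤ ∑ j, |a j * wc j| := Finset.abs_sum_le_sum_abs _ _
    _ ≤ ∑ j, |a j| * (n:ℤ) := by
        refine Finset.sum_le_sum fun j _ => ?_
        rw [abs_mul]
        refine mul_le_mul_of_nonneg_left ?_ (abs_nonneg _)
        have := hw j
        rw [abs_of_nonneg this.1]
        exact this.2
    _ = ((∑ j, (a j).natAbs : ℕ) : ℤ) * n := by
        rw [← Finset.sum_mul]
        congr 1
        push_cast
        exact Finset.sum_congr rfl fun j _ => (Int.abs_eq_natAbs _).symm ▸ rfl

lemma emod_sub_dvd {m : ℕ} {a b : ℤ} (h : a % (m:ℤ) = b % (m:ℤ)) : (m:ℤ) ∣ a - b := by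
  exact Int.dvd_of_emod_eq_zero (by rw [Int.sub_emod, h, sub_self, Int.zero_emod])



lemma invClass_recBlock_bound (d : ℕ) (X : Set (Fin (d+1) → ℤ)) (hX : InvClass X) :
    ∃ C : ℕ, 0 < C ∧ ∀ n : ℕ, 1 ≤ n → recBlockCount X n ≤ C * n ^ d := by
  classical
  obtain ⟨P, m, hm, hP⟩ := hX
  set Np : (Fin (d+1) → ℤ) × ℤ → ℕ := fun p => ∑ j, (p.1 j).natAbs with hNp
  set Kf : ((Fin (d+1) → ℤ) × ℤ) → ℕ → ℤ := fun p n => ((Np p * n : ℕ) : ℤ) with hKf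
  set clampv : ((Fin (d+1) → ℤ) × ℤ) → ℕ → (Fin (d+1) → ℤ) → ℤ := fun p n x =>
    max (-(Kf p n)) (min (p.2 - dot p.1 x) (Kf p n + 1)) with hclampv
  set τf : ℕ → (Fin (d+1) → ℤ) → (({p // p ∈ P} → ℤ) × (Fin (d+1) → ℤ)) := fun n x =>
    (fun p => clampv p.1 n x, fun j => x j % (m:ℤ)) with hτf
  set Good : ℕ → Set (({p // p ∈ P} → ℤ) × (Fin (d+1) → ℤ)) := fun n =>
    {t | ∀ L : ℕ, ∃ x, L ≤ supNorm x ∧ τf n x = t} with hGood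
  have hK0 : ∀ p n, (0:ℤ) ≤ Kf p n := fun p n => Int.natCast_nonneg _
  -- bounds on dot products over the window
  have hdotwb : ∀ (p : (Fin (d+1) → ℤ) × ℤ) (n : ℕ) (w : Fin (d+1) → Fin n),
      -(Kf p n) ≤ dot p.1 (fun i => ((w i : ℤ))) ∧
        dot p.1 (fun i => ((w i : ℤ))) ≤ Kf p n := by
    intro p n w
    have hwle : ∀ i, (0:ℤ) ≤ ((w i : ℕ) : ℤ) ∧ ((w i : ℕ) : ℤ) ≤ (n:ℤ) := fun i =>
      ⟨by positivity, by exact_mod_cast le_of_lt (w i).isLt⟩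
    have habs := abs_dot_le p.1 (fun i => ((w i : ℤ))) n hwle
    have hcast : ((Np p * n : ℕ) : ℤ) = ((Np p : ℕ) : ℤ) * (n : ℤ) := by push_cast; ring
    have habs' : |dot p.1 (fun i => ((w i : ℤ)))| ≤ Kf p n := by
      rw [hKf]; simp only; rw [hcast]; exact habs
    exact ⟨by linarith [abs_le.mp habs'], by linarith [abs_le.mp habs']⟩
  -- τ determines the block
  have hblockdet : ∀ (n : ℕ) (x x' : Fin (d+1) → ℤ), τf n x = τf n x' →
      blockOf X x n = blockOf X x' n := by
    intro n x x' ht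
    have ht1 : ∀ p : {p // p ∈ P}, clampv p.1 n x = clampv p.1 n x' := by
      intro p; exact congrFun (congrArg Prod.fst ht) p
    have ht2 : ∀ j, x j % (m:ℤ) = x' j % (m:ℤ) := by
      intro j; exact congrFun (congrArg Prod.snd ht) j
    funext w
    show ((fun i => x i + (w i : ℤ)) ∈ X) = ((fun i => x' i + (w i : ℤ)) ∈ X)
    refine propext (hP _ _ (fun p hp => ?_) (fun j => ?_))
    · have hb := hdotwb p n w
      have e1 : dot p.1 (fun i => x i + ((w i : ℤ))) =
          dot p.1 x + dot p.1 (fun i => ((w i : ℤ))) := dot_add_cast _ _ _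
      have e2 : dot p.1 (fun i => x' i + ((w i : ℤ))) =
          dot p.1 x' + dot p.1 (fun i => ((w i : ℤ))) := dot_add_cast _ _ _
      rw [e1, e2]
      have hcw := clamp_works (Kf p n) (p.2 - dot p.1 x)
        (dot p.1 (fun i => ((w i : ℤ)))) hb.1 hb.2
      have hcw' := clamp_works (Kf p n) (p.2 - dot p.1 x')
        (dot p.1 (fun i => ((w i : ℤ)))) hb.1 hb.2
      have c1 : (p.2 ≤ dot p.1 x + dot p.1 (fun i => ((w i : ℤ)))) ↔
          (clampv p n x ≤ dot p.1 (fun i => ((w i : ℤ)))) := by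
        rw [hclampv]
        constructor
        · intro h; exact hcw.mp (by linarith)
        · intro h; have := hcw.mpr h; linarith
      have c2 : (p.2 ≤ dot p.1 x' + dot p.1 (fun i => ((w i : ℤ)))) ↔
          (clampv p n x' ≤ dot p.1 (fun i => ((w i : ℤ)))) := by
        rw [hclampv]
        constructor
        · intro h; exact hcw'.mp (by linarith)
        · intro h; have := hcw'.mpr h; linarith
      have ht1' : clampv p n x = clampv p n x' := ht1 ⟨p, hp⟩
      rw [c1, c2, ht1']
    · have h1 := emod_sub_dvd (ht2 j)
      have he : (x j + ((w j : ℤ))) - (x' j + ((w j : ℤ))) = x j - x' j := by ring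
      rw [he]; exact h1
  -- range of τ is finite
  have hτbound : ∀ n x,
      (∀ p : {p // p ∈ P}, -(Kf p.1 n) ≤ (τf n x).1 p ∧ (τf n x).1 p ≤ Kf p.1 n + 1) ∧
      (∀ j, 0 ≤ (τf n x).2 j ∧ (τf n x).2 j ≤ (m:ℤ) - 1) := by
    intro n x
    constructor
    · intro p
      have hb : (τf n x).1 p = max (-(Kf p.1 n)) (min (p.1.2 - dot p.1.1 x) (Kf p.1 n + 1)) :=
        rfl
      rw [hb]
      have := hK0 p.1 n
      omega
    · intro j
      have hb : (τf n x).2 j = x j % (m:ℤ) := rfl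
      rw [hb]
      have h1 : 0 ≤ x j % (m:ℤ) := Int.emod_nonneg _ (by exact_mod_cast hm.ne')
      have h2 : x j % (m:ℤ) < m := Int.emod_lt_of_pos _ (by exact_mod_cast hm)
      omega
  have hrangefin : ∀ n, (Set.range (τf n)).Finite := by
    intro n
    refine Set.Finite.subset (pair_box_finite (fun p : {p // p ∈ P} => -(Kf p.1 n))
      (fun p => Kf p.1 n + 1) (fun _ => 0) (fun _ => (m:ℤ) - 1)) ?_
    rintro t ⟨x, rfl⟩
    exact ⟨(hτbound n x).1, (hτbound n x).2⟩
  have hGoodfin : ∀ n, (Good n).Finite := by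
    intro n
    refine Set.Finite.subset (hrangefin n) ?_
    intro t ht
    obtain ⟨x, -, hxe⟩ := ht 0
    exact ⟨x, hxe⟩
  -- recurrent blocks inject into Good
  have hcount1 : ∀ n : ℕ, 1 ≤ n → recBlockCount X n ≤ (Good n).ncard := by
    intro n hn
    have hpick : ∀ B : (Fin (d+1) → Fin n) → Prop, IsRecurrentBlock X n B →
        ∃ t, ∀ L : ℕ, ∃ x, L ≤ supNorm x ∧ blockOf X x n = B ∧ τf n x = t := by
      intro B hB
      by_contra hno
      push_neg at hno
      choose Lf hLf using hno
      obtain ⟨x, hx1, hx2⟩ := hB ((hrangefin n).toFinset.sup Lf)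
      have hmem : τf n x ∈ (hrangefin n).toFinset := by
        rw [Set.Finite.mem_toFinset]
        exact ⟨x, rfl⟩
      have hle : Lf (τf n x) ≤ (hrangefin n).toFinset.sup Lf := Finset.le_sup hmem
      exact (hLf (τf n x) x (le_trans hle hx1) hx2) rfl
    choose F hF using hpick
    have hrec : recBlockCount X n = {B : (Fin (d+1) → Fin n) → Prop |
        IsRecurrentBlock X n B}.ncard := rfl
    rw [hrec]
    set pick : ((Fin (d+1) → Fin n) → Prop) → (({p // p ∈ P} → ℤ) × (Fin (d+1) → ℤ)) :=
      fun B => if h : IsRecurrentBlock X n B then F B h else (fun _ => 0, fun _ => 0)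
      with hpickdef
    refine Set.ncard_le_ncard_of_injOn pick (fun B hB => ?_) (fun B hB B' hB' he => ?_)
      (hGoodfin n)
    · simp only [Set.mem_setOf_eq] at hB
      rw [hpickdef]
      simp only [dif_pos hB]
      intro L
      obtain ⟨x, h1, h2, h3⟩ := hF B hB L
      exact ⟨x, h1, h3⟩
    · simp only [Set.mem_setOf_eq] at hB hB'
      rw [hpickdef] at he
      simp only [dif_pos hB, dif_pos hB'] at he
      obtain ⟨x, -, hbx, htx⟩ := hF B hB 0
      obtain ⟨x', -, hbx', htx'⟩ := hF B' hB' 0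
      rw [← hbx, ← hbx']
      exact hblockdet n x x' (by rw [htx, htx', he])
  -- decomposition of Good
  set KK : ℕ := P.sup (fun p => (p.2).natAbs + Np p + 1) with hKK
  have hKK1 : ∀ p ∈ P, (p.2).natAbs + Np p + 1 ≤ KK := fun p hp =>
    hKK ▸ Finset.le_sup (f := fun p => (p.2).natAbs + Np p + 1) hp
  set Gs : ℕ → ({p // p ∈ P} → Fin 3) → (Fin (d+1) → ℤ) →
      Set (({p // p ∈ P} → ℤ) × (Fin (d+1) → ℤ)) := fun n σ ρ =>
    {t | t ∈ Good n ∧ (∀ p : {p // p ∈ P},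
        (σ p = 0 → t.1 p = -(Kf p.1 n)) ∧ (σ p = 1 → t.1 p = Kf p.1 n + 1) ∧
        (σ p = 2 → -(Kf p.1 n) < t.1 p ∧ t.1 p < Kf p.1 n + 1)) ∧
      ∀ j, t.2 j = ρ j} with hGsdef
  have hGsbound : ∀ σ : {p // p ∈ P} → Fin 3, ∃ Cc : ℕ, 0 < Cc ∧ ∀ n : ℕ, 1 ≤ n →
      ∀ ρ : Fin (d+1) → ℤ, (Gs n σ ρ).ncard ≤ Cc * n ^ d := by
    intro σ
    by_cases hk : ∃ u : Fin (d+1) → ℤ, u ≠ 0 ∧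
        ∀ p : {p // p ∈ P}, σ p = 2 → dot p.1.1 u = 0
    · -- kernel case: count via count_box_ker
      obtain ⟨u, hu0, huk⟩ := hk
      set gσ : Fin (d+1) → ({p // p ∈ P} → ℤ) := fun j => fun p =>
        if σ p = 2 then p.1.1 j else 0 with hgσ
      have hkg : ∀ p : {p // p ∈ P}, ∑ j, u j * gσ j p = 0 := by
        intro p
        by_cases h2 : σ p = 2
        · rw [hgσ]
          simp only [if_pos h2]
          calc ∑ j, u j * p.1.1 j = ∑ j, p.1.1 j * u j :=
                Finset.sum_congr rfl fun j _ => mul_comm _ _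
            _ = 0 := huk p h2
        · rw [hgσ]; simp [if_neg h2]
      obtain ⟨Cker, hCk0, hCk⟩ := count_box_ker gσ u hu0 hkg
      refine ⟨Cker * (2 * KK + 1) ^ d, by positivity, fun n hn ρ => ?_⟩
      set φm : (({p // p ∈ P} → ℤ) × (Fin (d+1) → ℤ)) → ({p // p ∈ P} → ℤ) := fun t =>
        fun p => if σ p = 2 then p.1.2 - t.1 p else 0 with hφm
      have hmaps : ∀ t ∈ Gs n σ ρ, φm t ∈ {y : {p // p ∈ P} → ℤ |
          (∃ x : Fin (d+1) → ℤ, y = fun p => ∑ j, x j * gσ j p) ∧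
          ∀ p, (y p).natAbs ≤ 2 * KK * n} := by
        rintro t ⟨htg, hσc, hρc⟩
        obtain ⟨x, -, hτx⟩ := htg 0
        have hexact : ∀ p : {p // p ∈ P}, σ p = 2 → p.1.2 - dot p.1.1 x = t.1 p := by
          intro p h2
          have hint := (hσc p).2.2 h2
          have hcl : max (-(Kf p.1 n)) (min (p.1.2 - dot p.1.1 x) (Kf p.1 n + 1)) = t.1 p := by
            rw [← hτx]
          omega
        constructor
        · refine ⟨x, ?_⟩
          funext p
          show (if σ p = 2 then p.1.2 - t.1 p else 0) = ∑ j, x j * gσ j p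
          have hgval : ∀ j, gσ j p = if σ p = 2 then p.1.1 j else 0 := fun j => rfl
          by_cases h2 : σ p = 2
          · rw [if_pos h2]
            have hsum : ∑ j, x j * gσ j p = dot p.1.1 x := by
              calc ∑ j, x j * gσ j p = ∑ j, x j * p.1.1 j :=
                    Finset.sum_congr rfl fun j _ => by rw [hgval j, if_pos h2]
                _ = ∑ j, p.1.1 j * x j := Finset.sum_congr rfl fun j _ => mul_comm _ _
            rw [hsum]
            have := hexact p h2
            omega
          · rw [if_neg h2]
            have hsum : ∑ j, x j * gσ j p = 0 := by
              refine Finset.sum_eq_zero fun j _ => ?_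
              rw [hgval j, if_neg h2, mul_zero]
            rw [hsum]
        · intro p
          show ((if σ p = 2 then p.1.2 - t.1 p else 0)).natAbs ≤ 2 * KK * n
          by_cases h2 : σ p = 2
          · rw [if_pos h2]
            have hbd := (hσc p).2.2 h2
            have hb2 := hKK1 p.1 p.2
            have hNpKK : Np p.1 ≤ KK := by omega
            have habs2 : (p.1.2).natAbs + 1 ≤ KK := by omega
            obtain ⟨Q, hQ⟩ : ∃ Q, Np p.1 * n = Q := ⟨_, rfl⟩
            have hbd' : -((Q:ℤ)) < t.1 p ∧ t.1 p < (Q:ℤ) + 1 := by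
              have hKfv : Kf p.1 n = ((Np p.1 * n : ℕ) : ℤ) := rfl
              rw [hKfv, hQ] at hbd
              exact hbd
            obtain ⟨R, hR⟩ : ∃ R, KK * n = R := ⟨_, rfl⟩
            have hQR : Q ≤ R := by rw [← hQ, ← hR]; exact Nat.mul_le_mul_right n hNpKK
            have hKKR : KK ≤ R := by
              rw [← hR]; exact Nat.le_mul_of_pos_right KK hn
            have hgoal : 2 * KK * n = 2 * R := by rw [← hR]; ring
            rw [hgoal]
            omega
          · rw [if_neg h2]; simp
      have hinj : Set.InjOn φm (Gs n σ ρ) := by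
        rintro t ⟨htg, hσc, hρc⟩ t' ⟨htg', hσc', hρc'⟩ he
        have h1 : t.1 = t'.1 := by
          funext p
          rcases fin3_cases (σ p) with h | h | h
          · rw [((hσc p).1) h, ((hσc' p).1) h]
          · rw [((hσc p).2.1) h, ((hσc' p).2.1) h]
          · have hthis : (if σ p = 2 then p.1.2 - t.1 p else 0)
                = (if σ p = 2 then p.1.2 - t'.1 p else 0) := congrFun he p
            rw [if_pos h, if_pos h] at hthis
            omega
        have h2 : t.2 = t'.2 := by
          funext j
          rw [hρc j, hρc' j]
        exact Prod.ext h1 h2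
      calc (Gs n σ ρ).ncard
          ≤ {y : {p // p ∈ P} → ℤ |
              (∃ x : Fin (d+1) → ℤ, y = fun p => ∑ j, x j * gσ j p) ∧
              ∀ p, (y p).natAbs ≤ 2 * KK * n}.ncard :=
            Set.ncard_le_ncard_of_injOn φm hmaps hinj
              (Set.Finite.subset (box_finite (2 * KK * n)) (fun y hy => hy.2))
        _ ≤ Cker * (2 * KK * n + 1) ^ d := hCk (2 * KK * n)
        _ ≤ Cker * (2 * KK + 1) ^ d * n ^ d := by
            have h1 : 2 * KK * n + 1 ≤ (2 * KK + 1) * n := by nlinarith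
            have h2 : (2 * KK * n + 1) ^ d ≤ ((2 * KK + 1) * n) ^ d :=
              Nat.pow_le_pow_left h1 d
            rw [mul_pow] at h2
            calc Cker * (2 * KK * n + 1) ^ d
                ≤ Cker * ((2 * KK + 1) ^ d * n ^ d) := Nat.mul_le_mul_left _ h2
              _ = Cker * (2 * KK + 1) ^ d * n ^ d := by ring
    · -- no kernel: the class is empty
      push_neg at hk
      refine ⟨1, one_pos, fun n hn ρ => ?_⟩
      have hempty : Gs n σ ρ = ∅ := by
        rw [Set.eq_empty_iff_forall_notMem]
        rintro t ⟨htg, hσc, hρc⟩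
        obtain ⟨x0, -, hτ0⟩ := htg 0
        obtain ⟨x1, hL1, hτ1⟩ := htg (supNorm x0 + 1)
        have hudot : ∀ p : {p // p ∈ P}, σ p = 2 →
            dot p.1.1 (fun j => x0 j - x1 j) = 0 := by
          intro p h2
          have hint := (hσc p).2.2 h2
          have hcl0 : max (-(Kf p.1 n)) (min (p.1.2 - dot p.1.1 x0) (Kf p.1 n + 1)) = t.1 p := by
            rw [← hτ0]
          have hcl1 : max (-(Kf p.1 n)) (min (p.1.2 - dot p.1.1 x1) (Kf p.1 n + 1)) = t.1 p := by
            rw [← hτ1]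
          have he0 : p.1.2 - dot p.1.1 x0 = t.1 p := by omega
          have he1 : p.1.2 - dot p.1.1 x1 = t.1 p := by omega
          have hds : dot p.1.1 (fun j => x0 j - x1 j) =
              dot p.1.1 x0 - dot p.1.1 x1 := dot_sub' _ _ _
          rw [hds]
          omega
        have hu0 : (fun j => x0 j - x1 j) = (0 : Fin (d+1) → ℤ) := by
          by_contra hne
          obtain ⟨p, h2, hd⟩ := hk _ hne
          exact hd (hudot p h2)
        have hx01 : x0 = x1 := by
          funext j
          have := congrFun hu0 j
          simp only [Pi.zero_apply] at this
          omega
        rw [hx01] at hL1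
        omega
      rw [hempty]
      simp
  choose Cf hCf0 hCf using hGsbound
  refine ⟨(∑ σ : {p // p ∈ P} → Fin 3, Cf σ) * m ^ (d+1) + 1, by positivity, fun n hn => ?_⟩
  -- coverage of Good by the classes
  have hcover : Good n ⊆ ⋃ σ ∈ (Finset.univ : Finset ({p // p ∈ P} → Fin 3)),
      ⋃ ρ ∈ Fintype.piFinset (fun _ : Fin (d+1) => Finset.Ico (0:ℤ) (m:ℤ)), Gs n σ ρ := by
    intro t ht
    have hbds : (∀ p : {p // p ∈ P}, -(Kf p.1 n) ≤ t.1 p ∧ t.1 p ≤ Kf p.1 n + 1) ∧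
        (∀ j, 0 ≤ t.2 j ∧ t.2 j ≤ (m:ℤ) - 1) := by
      obtain ⟨x, -, hxe⟩ := ht 0
      rw [← hxe]
      exact ⟨(hτbound n x).1, (hτbound n x).2⟩
    set σ0 : {p // p ∈ P} → Fin 3 := fun p =>
      if t.1 p = -(Kf p.1 n) then 0 else if t.1 p = Kf p.1 n + 1 then 1 else 2 with hσ0
    refine Set.mem_biUnion (Finset.mem_univ σ0) ?_
    refine Set.mem_biUnion (show t.2 ∈ Fintype.piFinset
      (fun _ : Fin (d+1) => Finset.Ico (0:ℤ) (m:ℤ)) from ?_) ?_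
    · rw [Fintype.mem_piFinset]
      intro j
      rw [Finset.mem_Ico]
      have := hbds.2 j
      omega
    · refine ⟨ht, fun p => ?_, fun j => rfl⟩
      rw [hσ0]
      by_cases hc0 : t.1 p = -(Kf p.1 n)
      · simp only [if_pos hc0]
        refine ⟨fun _ => hc0, fun hcc => by exact absurd hcc (by decide), fun hcc =>
          absurd hcc (by decide)⟩
      · by_cases hc1 : t.1 p = Kf p.1 n + 1
        · simp only [if_neg hc0, if_pos hc1]
          exact ⟨fun hcc => absurd hcc (by decide), fun _ => hc1, fun hcc =>
            absurd hcc (by decide)⟩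
        · simp only [if_neg hc0, if_neg hc1]
          refine ⟨fun hcc => absurd hcc (by decide), fun hcc => absurd hcc (by decide),
            fun _ => ?_⟩
          have := hbds.1 p
          omega
  calc recBlockCount X n ≤ (Good n).ncard := hcount1 n hn
    _ ≤ (⋃ σ ∈ (Finset.univ : Finset ({p // p ∈ P} → Fin 3)),
        ⋃ ρ ∈ Fintype.piFinset (fun _ : Fin (d+1) => Finset.Ico (0:ℤ) (m:ℤ)),
          Gs n σ ρ).ncard := by
        refine Set.ncard_le_ncard hcover ?_
        refine Set.Finite.biUnion (Finset.finite_toSet _) fun σ _ => ?_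
        refine Set.Finite.biUnion (Finset.finite_toSet _) fun ρ _ => ?_
        exact Set.Finite.subset (hGoodfin n) (fun t htm => htm.1)
    _ ≤ ∑ σ ∈ (Finset.univ : Finset ({p // p ∈ P} → Fin 3)),
          (⋃ ρ ∈ Fintype.piFinset (fun _ : Fin (d+1) => Finset.Ico (0:ℤ) (m:ℤ)),
          Gs n σ ρ).ncard := ncard_biUnion_le _ _
    _ ≤ ∑ σ ∈ (Finset.univ : Finset ({p // p ∈ P} → Fin 3)),
          ∑ ρ ∈ Fintype.piFinset (fun _ : Fin (d+1) => Finset.Ico (0:ℤ) (m:ℤ)),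
            (Gs n σ ρ).ncard :=
        Finset.sum_le_sum fun σ _ => ncard_biUnion_le _ _
    _ ≤ ∑ σ ∈ (Finset.univ : Finset ({p // p ∈ P} → Fin 3)),
          ∑ _ρ ∈ Fintype.piFinset (fun _ : Fin (d+1) => Finset.Ico (0:ℤ) (m:ℤ)),
            Cf σ * n ^ d :=
        Finset.sum_le_sum fun σ _ => Finset.sum_le_sum fun ρ _ => hCf σ n hn ρ
    _ ≤ ((∑ σ : {p // p ∈ P} → Fin 3, Cf σ) * m ^ (d+1) + 1) * n ^ d := by
        have hcard : (Fintype.piFinset (fun _ : Fin (d+1) =>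
            Finset.Ico (0:ℤ) (m:ℤ))).card = m ^ (d+1) := by
          rw [Fintype.card_piFinset]
          have : (Finset.Ico (0:ℤ) (m:ℤ)).card = m := by
            rw [Int.card_Ico]
            omega
          rw [Finset.prod_congr rfl fun _ _ => this, Finset.prod_const,
            Finset.card_univ, Fintype.card_fin]
        calc ∑ σ ∈ (Finset.univ : Finset ({p // p ∈ P} → Fin 3)),
              ∑ _ρ ∈ Fintype.piFinset (fun _ : Fin (d+1) => Finset.Ico (0:ℤ) (m:ℤ)),
                Cf σ * n ^ d
            = ∑ σ ∈ (Finset.univ : Finset ({p // p ∈ P} → Fin 3)),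
                m ^ (d+1) * (Cf σ * n ^ d) := by
              refine Finset.sum_congr rfl fun σ _ => ?_
              rw [Finset.sum_const, hcard]
              ring
          _ = (∑ σ : {p // p ∈ P} → Fin 3, Cf σ) * m ^ (d+1) * n ^ d := by
              rw [← Finset.mul_sum, ← Finset.sum_mul]
              ring
          _ ≤ ((∑ σ : {p // p ∈ P} → Fin 3, Cf σ) * m ^ (d+1) + 1) * n ^ d :=
              Nat.mul_le_mul_right _ (by omega)


end SLAux
/-- Complexity of Presburger-definable (semilinear) sets:
if `X ⊆ ℤ^(d+1)` is semilinear, then `R_X(n) ∈ O(n^d)`. -/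
theorem semilinear_recBlockCount_bound (d : ℕ) (X : Set (Fin (d + 1) → ℤ))
    (h : IsSemilinearSetZd X) :
    ∃ C : ℝ, 0 < C ∧ ∀ n : ℕ, 1 ≤ n →
      (recBlockCount X n : ℝ) ≤ C * (n : ℝ) ^ d := by
  obtain ⟨C, hC0, hC⟩ := SLAux.invClass_recBlock_bound d X (SLAux.invClass_of_semilinear h)
  refine ⟨(C : ℝ), by exact_mod_cast hC0, fun n hn => ?_⟩
  have h1 := hC n hn
  have h2 : ((recBlockCount X n : ℕ) : ℝ) ≤ ((C * n ^ d : ℕ) : ℝ) := by exact_mod_cast h1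
  calc (recBlockCount X n : ℝ) ≤ ((C * n ^ d : ℕ) : ℝ) := h2
    _ = (C : ℝ) * (n : ℝ) ^ d := by push_cast; ring
end
end

section
/- Let d ≥ 1 and let π_1, …, π_j be affine hyperplanes in ℝ^d, where π_i = {x ∈ ℝ^d : φ_i(x) = c_i} for nonzero linear forms φ_i on ℝ^d and constants c_i ∈ ℝ, with direction subspaces π_i' = ker φ_i. Let n ≥ 1. If there exist infinitely many distinct vectors y ∈ ℤ^d such that the cube y + [0,n]^d (viewed in ℝ^d) intersects each of the hyperplanes π_1, …, π_j, then the intersection π_1' ∩ ⋯ ∩ π_j' has dimension at least 1, i.e. it contains a nonzero vector. -/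
open Classical

noncomputable section

/-- Lemma: if infinitely many integer translates of the cube `[0,n]^d`
intersect each of the hyperplanes `π_m = {x : φ_m x = c_m}`, then the
intersection of the direction subspaces `ker φ_m` contains a nonzero vector. -/
theorem hyperplanes_common_direction (d j : ℕ) (hd : 1 ≤ d)
    (φ : Fin j → (Fin d → ℝ) →ₗ[ℝ] ℝ) (hφ : ∀ m, φ m ≠ 0)
    (c : Fin j → ℝ) (n : ℕ) (hn : 1 ≤ n)
    (hinf : {y : Fin d → ℤ | ∀ m, ∃ t : Fin d → ℝ,
      (∀ i, t i ∈ Set.Icc (0 : ℝ) (n : ℝ)) ∧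
      φ m ((fun i => (y i : ℝ)) + t) = c m}.Infinite) :
    ∃ w : Fin d → ℝ, w ≠ 0 ∧ ∀ m, φ m w = 0 := by
  by_contra h
  push_neg at h
  -- The combined map Ψ is injective
  set Ψ : (Fin d → ℝ) →ₗ[ℝ] (Fin j → ℝ) := LinearMap.pi φ with hΨ
  have hinj : Function.Injective Ψ := by
    rw [← LinearMap.ker_eq_bot, Submodule.eq_bot_iff]
    intro x hx
    by_contra hx0
    obtain ⟨m, hm⟩ := h x hx0
    exact hm (congrFun (hx : Ψ x = 0) m)
  obtain ⟨K, hKpos, hK⟩ := Ψ.injective_iff_antilipschitz.mp hinj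
  -- a uniform bound on each |φ m (y)| for y in the set
  set Φ : Fin j → (Fin d → ℝ) →L[ℝ] ℝ := fun m => (φ m).toContinuousLinearMap with hΦ
  set B : ℝ := ∑ m, (|c m| + ‖Φ m‖ * n) with hB
  have hCnonneg : ∀ m, (0:ℝ) ≤ |c m| + ‖Φ m‖ * n := fun m => by positivity
  have hB0 : 0 ≤ B := Finset.sum_nonneg fun m _ => hCnonneg m
  have hCle : ∀ m, |c m| + ‖Φ m‖ * n ≤ B := fun m =>
    Finset.single_le_sum (fun m _ => hCnonneg m) (Finset.mem_univ m)
  set S := {y : Fin d → ℤ | ∀ m, ∃ t : Fin d → ℝ,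
      (∀ i, t i ∈ Set.Icc (0 : ℝ) (n : ℝ)) ∧
      φ m ((fun i => (y i : ℝ)) + t) = c m} with hS
  have key : ∀ y ∈ S, ∀ i, |(y i : ℝ)| ≤ K * B := by
    intro y hy i
    have hΨy : ‖Ψ (fun i => (y i : ℝ))‖ ≤ B := by
      rw [pi_norm_le_iff_of_nonneg hB0]
      intro m
      obtain ⟨t, ht, heq⟩ := hy m
      have htn : ‖t‖ ≤ (n : ℝ) := by
        rw [pi_norm_le_iff_of_nonneg (by positivity)]
        intro i
        rw [Real.norm_eq_abs, abs_le]
        exact ⟨le_trans (by norm_num) (ht i).1, (ht i).2⟩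
      have : φ m (fun i => (y i : ℝ)) = c m - φ m t := by
        have := heq
        rw [map_add] at this
        linarith
      have hval : Ψ (fun i => (y i : ℝ)) m = c m - φ m t := this
      rw [hval, Real.norm_eq_abs]
      have h1 : |φ m t| ≤ ‖Φ m‖ * ‖t‖ := (Φ m).le_opNorm t
      have h2 : ‖Φ m‖ * ‖t‖ ≤ ‖Φ m‖ * n := by
        apply mul_le_mul_of_nonneg_left htn (norm_nonneg _)
      calc |c m - φ m t| ≤ |c m| + |φ m t| := abs_sub _ _
        _ ≤ |c m| + ‖Φ m‖ * n := by linarith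
        _ ≤ B := hCle m
    have hy' : ‖(fun i => (y i : ℝ))‖ ≤ K * B := by
      have := hK.le_mul_dist (fun i => (y i : ℝ)) 0
      simp only [dist_zero_right, map_zero] at this
      calc ‖(fun i => (y i : ℝ))‖ ≤ K * ‖Ψ (fun i => (y i : ℝ))‖ := by
            simpa [dist_eq_norm] using this
        _ ≤ K * B := by
            apply mul_le_mul_of_nonneg_left hΨy (by positivity)
    calc |(y i : ℝ)| = ‖(fun i => (y i : ℝ)) i‖ := (Real.norm_eq_abs _).symm
      _ ≤ ‖(fun i => (y i : ℝ))‖ := norm_le_pi_norm (fun i => (y i : ℝ)) i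
      _ ≤ K * B := hy'
  -- hence S is finite, contradiction
  set M : ℤ := ⌈(K : ℝ) * B⌉ with hM
  have hsub : S ⊆ Set.pi Set.univ (fun _ : Fin d => Set.Icc (-M) M) := by
    intro y hy
    intro i _
    have := key y hy i
    rw [abs_le] at this
    constructor
    · have : -(M:ℝ) ≤ (y i : ℝ) := le_trans (neg_le_neg (Int.le_ceil _)) this.1
      exact_mod_cast this
    · have : (y i : ℝ) ≤ (M:ℝ) := le_trans this.2 (Int.le_ceil _)
      exact_mod_cast this
  exact hinf (Set.Finite.subset (Set.Finite.pi fun i => Set.finite_Icc _ _) hsub)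
end
end

section
/- Let d ≥ 1, M ⊆ ℤ^d and C > 0 be such that R_M(n) ≤ C·n^{d−1} for all n ≥ 1. Let n ∈ ℕ. Then there exists m₀ ∈ ℕ such that for all m satisfying m < n and m^d − C·n^{d−1} ≥ 1, and for all z ∈ ℤ^d with ‖z‖ ≥ m₀ + m, there exists a nonzero vector v ∈ ℤ^d with ‖v‖ ≤ m such that M_{z−v, n−m} = M_{z, n−m} = M_{z+v, n−m}. -/
open Classical

noncomputable section

/-- Linear subset of `ℤ^ι`. -/
def IsLinearSetInt {ι : Type} [Fintype ι] (S : Set (ι → ℤ)) : Prop :=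
  ∃ (x : ι → ℤ) (V : Finset (ι → ℤ)),
    S = {y | ∃ c : (ι → ℤ) → ℕ, y = x + ∑ v ∈ V, (c v : ℤ) • v}

/-- Semilinear = finite union of linear sets. -/
def IsSemilinearSetInt {ι : Type} [Fintype ι] (S : Set (ι → ℤ)) : Prop :=
  ∃ F : Finset (Set (ι → ℤ)), (∀ T ∈ F, IsLinearSetInt T) ∧ S = ⋃ T ∈ F, T

lemma supNorm_le_iff {ι : Type} [Fintype ι] (x : ι → ℤ) (k : ℕ) :
    supNorm x ≤ k ↔ ∀ i, (x i).natAbs ≤ k := by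
  simp [supNorm, Finset.sup_le_iff]

lemma supNorm_sub_le {ι : Type} [Fintype ι] (x y : ι → ℤ) :
    supNorm x ≤ supNorm (x - y) + supNorm y := by
  rw [supNorm_le_iff]
  intro i
  have h1 : ((x - y) i).natAbs ≤ supNorm (x - y) :=
    Finset.le_sup (f := fun i => ((x - y) i).natAbs) (Finset.mem_univ i)
  have h2 : (y i).natAbs ≤ supNorm y :=
    Finset.le_sup (f := fun i => (y i).natAbs) (Finset.mem_univ i)
  have : (x - y) i = x i - y i := rfl
  omega

/-- Lemma (Quas–Zamboni style): if `R_M(n) ≤ C·n^{d-1}` for all `n ≥ 1`, then for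
each `n` there is `m₀` such that for every `m < n` with `m^d - C·n^{d-1} ≥ 1`
and every `z` with `‖z‖ ≥ m₀ + m` there is a nonzero `v` with `‖v‖ ≤ m` and
`M_{z-v,n-m} = M_{z,n-m} = M_{z+v,n-m}`. -/
theorem local_period_lemma (d : ℕ) (hd : 1 ≤ d) (M : Set (Fin d → ℤ))
    (C : ℝ) (hC : 0 < C)
    (hR : ∀ n : ℕ, 1 ≤ n → (recBlockCount M n : ℝ) ≤ C * (n : ℝ) ^ (d - 1))
    (n : ℕ) :
    ∃ m₀ : ℕ, ∀ m : ℕ, m < n → 1 ≤ (m : ℝ) ^ d - C * (n : ℝ) ^ (d - 1) →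
      ∀ z : Fin d → ℤ, (m₀ + m : ℕ) ≤ supNorm z →
        ∃ v : Fin d → ℤ, v ≠ 0 ∧ supNorm v ≤ m ∧
          blockOf M (z - v) (n - m) = blockOf M z (n - m) ∧
          blockOf M z (n - m) = blockOf M (z + v) (n - m) := by
  classical
  -- choose a bound beyond which every occurring block of size n is recurrent
  have hex : ∀ B : (Fin d → Fin n) → Prop, ∃ L : ℕ,
      ¬ IsRecurrentBlock M n B → ∀ x : Fin d → ℤ, L ≤ supNorm x → blockOf M x n ≠ B := by
    intro B
    by_cases hB : IsRecurrentBlock M n B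
    · exact ⟨0, fun h => absurd hB h⟩
    · unfold IsRecurrentBlock at hB
      push_neg at hB
      obtain ⟨L, hL⟩ := hB
      exact ⟨L, fun _ x hx => hL x hx⟩
  choose L hL using hex
  obtain ⟨m₀, hm₀⟩ := Finite.exists_le L
  have key : ∀ x : Fin d → ℤ, m₀ ≤ supNorm x → IsRecurrentBlock M n (blockOf M x n) := by
    intro x hx
    by_contra h
    exact hL _ h x (le_trans (hm₀ _) hx) rfl
  refine ⟨m₀, fun m hmn hm z hz => ?_⟩
  -- basic numerics
  have hCn : 0 ≤ C * (n : ℝ) ^ (d - 1) :=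
    mul_nonneg hC.le (pow_nonneg (Nat.cast_nonneg n) _)
  have hm1 : 1 ≤ m := by
    by_contra h
    have : m = 0 := by omega
    subst this
    rw [show ((0 : ℕ) : ℝ) = 0 by norm_num, zero_pow (by omega : d ≠ 0)] at hm
    linarith
  have hn1 : 1 ≤ n := by omega
  -- cardinality bound
  set Q : Set ((Fin d → Fin n) → Prop) := {B | IsRecurrentBlock M n B} with hQ
  have hQfin : Q.Finite := Set.toFinite _
  have hcard : Q.ncard < (m + 1) ^ d := by
    have h1 : (Q.ncard : ℝ) ≤ C * (n : ℝ) ^ (d - 1) := hR n hn1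
    have h2 : (Q.ncard : ℝ) + 1 ≤ ((m ^ d : ℕ) : ℝ) := by push_cast; linarith
    have h3 : Q.ncard + 1 ≤ m ^ d := by exact_mod_cast h2
    have h4 : m ^ d ≤ (m + 1) ^ d := Nat.pow_le_pow_left (by omega) d
    omega
  -- pigeonhole among the (m+1)^d points z - w, w ∈ [0,m]^d
  have hcard' : hQfin.toFinset.card < (Finset.univ : Finset (Fin d → Fin (m + 1))).card := by
    rw [← Set.ncard_eq_toFinset_card _ hQfin]
    simpa using hcard
  have hmaps : ∀ w ∈ (Finset.univ : Finset (Fin d → Fin (m + 1))),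
      blockOf M (fun i => z i - ((w i : ℕ) : ℤ)) n ∈ hQfin.toFinset := by
    intro w _
    rw [Set.Finite.mem_toFinset]
    apply key
    have hw : supNorm (fun i => ((w i : ℕ) : ℤ)) ≤ m := by
      rw [supNorm_le_iff]
      intro i
      have := (w i).isLt
      simp only [Int.natAbs_natCast]
      omega
    have htri := supNorm_sub_le z (fun i => ((w i : ℕ) : ℤ))
    have : (z - fun i => ((w i : ℕ) : ℤ)) = (fun i => z i - ((w i : ℕ) : ℤ)) := rfl
    rw [this] at htri
    omega
  obtain ⟨w1, -, w2, -, hne, heq⟩ :=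
    Finset.exists_ne_map_eq_of_card_lt_of_maps_to hcard' hmaps
  -- the period vector
  refine ⟨fun i => ((w1 i : ℕ) : ℤ) - ((w2 i : ℕ) : ℤ), ?_, ?_, ?_, ?_⟩
  · intro h
    apply hne
    funext i
    have := congrFun h i
    simp only [Pi.zero_apply, sub_eq_zero] at this
    exact Fin.ext (by exact_mod_cast this)
  · rw [supNorm_le_iff]
    intro i
    have h1 := (w1 i).isLt
    have h2 := (w2 i).isLt
    omega
  · -- blockOf M (z - v) (n - m) = blockOf M z (n - m)
    funext t
    have hsb : ∀ i : Fin d, (w2 i : ℕ) + (t i : ℕ) < n := by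
      intro i
      have := (w2 i).isLt
      have := (t i).isLt
      omega
    have hiff := congrFun heq (fun i => (⟨(w2 i : ℕ) + (t i : ℕ), hsb i⟩ : Fin n))
    show ((fun i => (z - fun j => ((w1 j : ℕ) : ℤ) - ((w2 j : ℕ) : ℤ)) i + ((t i : ℕ) : ℤ)) ∈ M) =
      ((fun i => z i + ((t i : ℕ) : ℤ)) ∈ M)
    have e1 : (fun i => (z - fun j => ((w1 j : ℕ) : ℤ) - ((w2 j : ℕ) : ℤ)) i + ((t i : ℕ) : ℤ)) =
        (fun i => (z i - ((w1 i : ℕ) : ℤ)) + (((w2 i : ℕ) + (t i : ℕ) : ℕ) : ℤ)) := by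
      funext i
      show z i - (((w1 i : ℕ) : ℤ) - ((w2 i : ℕ) : ℤ)) + ((t i : ℕ) : ℤ) = _
      push_cast
      ring
    have e2 : (fun i => z i + ((t i : ℕ) : ℤ)) =
        (fun i => (z i - ((w2 i : ℕ) : ℤ)) + (((w2 i : ℕ) + (t i : ℕ) : ℕ) : ℤ)) := by
      funext i; push_cast; ring
    rw [e1, e2]
    exact hiff
  · -- blockOf M z (n - m) = blockOf M (z + v) (n - m)
    funext t
    have hsb : ∀ i : Fin d, (w1 i : ℕ) + (t i : ℕ) < n := by
      intro i
      have := (w1 i).isLt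
      have := (t i).isLt
      omega
    have hiff := congrFun heq (fun i => (⟨(w1 i : ℕ) + (t i : ℕ), hsb i⟩ : Fin n))
    show ((fun i => z i + ((t i : ℕ) : ℤ)) ∈ M) =
      ((fun i => (z + fun j => ((w1 j : ℕ) : ℤ) - ((w2 j : ℕ) : ℤ)) i + ((t i : ℕ) : ℤ)) ∈ M)
    have e1 : (fun i => z i + ((t i : ℕ) : ℤ)) =
        (fun i => (z i - ((w1 i : ℕ) : ℤ)) + (((w1 i : ℕ) + (t i : ℕ) : ℕ) : ℤ)) := by
      funext i; push_cast; ring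
    have e2 : (fun i => (z + fun j => ((w1 j : ℕ) : ℤ) - ((w2 j : ℕ) : ℤ)) i + ((t i : ℕ) : ℤ)) =
        (fun i => (z i - ((w2 i : ℕ) : ℤ)) + (((w1 i : ℕ) + (t i : ℕ) : ℕ) : ℤ)) := by
      funext i
      show z i + (((w1 i : ℕ) : ℤ) - ((w2 i : ℕ) : ℤ)) + ((t i : ℕ) : ℤ) = _
      push_cast
      ring
    rw [e1, e2]
    exact hiff
end
end

section
/- Let d ≥ 1, M ⊆ ℤ^d and C > 0 be such that R_M(n) ≤ C·n^{d−1} for all n ≥ 1. Then there exists K₀ such that for all K ≥ K₀ there exists L ≥ 0 such that for every x ∈ ℤ^d with ‖x‖ ≥ L there exists a nonzero vector v ∈ ℤ^d with ‖v‖ ≤ (2C)^{1/d}·(5K)^{(d−1)/d} such that M is v-periodic inside B(x,K). -/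
open Classical

noncomputable section

/-- Linear subset of `ℤ^ι`. -/
def IsLinearSetZ {ι : Type} [Fintype ι] (S : Set (ι → ℤ)) : Prop :=
  ∃ (x : ι → ℤ) (V : Finset (ι → ℤ)),
    S = {y | ∃ c : (ι → ℤ) → ℕ, y = x + ∑ v ∈ V, (c v : ℤ) • v}

/-- Semilinear = finite union of linear sets. -/
def IsSemilinearSetZ {ι : Type} [Fintype ι] (S : Set (ι → ℤ)) : Prop :=
  ∃ F : Finset (Set (ι → ℤ)), (∀ T ∈ F, IsLinearSetZ T) ∧ S = ⋃ T ∈ F, T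

lemma exists_far_recurrent {d : ℕ} (M : Set (Fin d → ℤ)) (n : ℕ) :
    ∃ L' : ℕ, ∀ z : Fin d → ℤ, L' ≤ supNorm z →
      IsRecurrentBlock M n (blockOf M z n) := by
  classical
  have key : ∀ B : (Fin d → Fin n) → Prop, ∃ L : ℕ,
      IsRecurrentBlock M n B ∨ ∀ z, L ≤ supNorm z → blockOf M z n ≠ B := by
    intro B
    by_cases h : IsRecurrentBlock M n B
    · exact ⟨0, Or.inl h⟩
    · unfold IsRecurrentBlock at h
      push_neg at h
      obtain ⟨L, hL⟩ := h
      exact ⟨L, Or.inr hL⟩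
  choose g hg using key
  refine ⟨Finset.univ.sup g, fun z hz => ?_⟩
  rcases hg (blockOf M z n) with h | h
  · exact h
  · exact absurd rfl (h z (le_trans (Finset.le_sup (Finset.mem_univ _)) hz))

lemma pow_eq' {d : ℕ} (hd : 1 ≤ d) (C : ℝ) (hC : 0 < C) (K : ℕ) :
    ((2*C) ^ ((1:ℝ)/d) * (5*(K:ℝ)) ^ (((d:ℝ)-1)/d)) ^ d
      = 2*C*(5*(K:ℝ)) ^ (d-1) := by
  have hd0 : (d:ℝ) ≠ 0 := by positivity
  have h2C : (0:ℝ) ≤ 2*C := by positivity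
  have h5K : (0:ℝ) ≤ 5*(K:ℝ) := by positivity
  rw [mul_pow, ← Real.rpow_natCast ((2*C) ^ ((1:ℝ)/d)) d,
      ← Real.rpow_natCast ((5*(K:ℝ)) ^ (((d:ℝ)-1)/d)) d,
      ← Real.rpow_mul h2C, ← Real.rpow_mul h5K]
  rw [one_div_mul_cancel hd0, Real.rpow_one, div_mul_cancel₀ _ hd0]
  congr 1
  rw [← Real.rpow_natCast (5*(K:ℝ)) (d-1)]
  congr 1
  push_cast [Nat.cast_sub hd]; ring

lemma t_le_K' {d : ℕ} (hd : 1 ≤ d) (C : ℝ) (hC : 0 < C) (K : ℕ) (hK1 : (1:ℝ) ≤ K)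
    (hKC : (5:ℝ)^d * (2*C) ≤ K) :
    (2*C) ^ ((1:ℝ)/d) * (5*(K:ℝ)) ^ (((d:ℝ)-1)/d) ≤ K := by
  have hd0 : (0:ℝ) < d := by exact_mod_cast hd
  have hK0 : (0:ℝ) ≤ K := by linarith
  set θ : ℝ := ((d:ℝ)-1)/d with hθ
  have hθ0 : 0 ≤ θ := by
    apply div_nonneg _ hd0.le
    have : (1:ℝ) ≤ d := by exact_mod_cast hd
    linarith
  have hθ1 : θ ≤ 1 := by rw [hθ, div_le_one hd0]; linarith
  have hsplit : (5*(K:ℝ)) ^ θ = (5:ℝ)^θ * (K:ℝ)^θ :=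
    Real.mul_rpow (by norm_num) hK0
  have h5θ : (5:ℝ)^θ ≤ 5 := by
    calc (5:ℝ)^θ ≤ (5:ℝ)^(1:ℝ) :=
          Real.rpow_le_rpow_of_exponent_le (by norm_num) hθ1
    _ = 5 := Real.rpow_one 5
  have hA5 : (5:ℝ) * (2*C) ^ ((1:ℝ)/d) ≤ (K:ℝ)^((1:ℝ)/d) := by
    have h1 : ((5:ℝ)^d * (2*C)) ^ ((1:ℝ)/d) ≤ (K:ℝ)^((1:ℝ)/d) :=
      Real.rpow_le_rpow (by positivity) hKC (by positivity)
    have h2 : ((5:ℝ)^d * (2*C)) ^ ((1:ℝ)/d) = 5 * (2*C) ^ ((1:ℝ)/d) := by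
      rw [Real.mul_rpow (by positivity) (by positivity)]
      congr 1
      rw [← Real.rpow_natCast (5:ℝ) d, ← Real.rpow_mul (by norm_num)]
      rw [mul_one_div, div_self (ne_of_gt hd0), Real.rpow_one]
    rw [← h2]; exact h1
  have hKθ : (0:ℝ) ≤ (K:ℝ)^θ := Real.rpow_nonneg hK0 θ
  have hA0 : (0:ℝ) ≤ (2*C) ^ ((1:ℝ)/d) := by positivity
  calc (2*C) ^ ((1:ℝ)/d) * (5*(K:ℝ)) ^ θ
      = (2*C) ^ ((1:ℝ)/d) * ((5:ℝ)^θ * (K:ℝ)^θ) := by rw [hsplit]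
    _ ≤ (2*C) ^ ((1:ℝ)/d) * (5 * (K:ℝ)^θ) := by
        apply mul_le_mul_of_nonneg_left _ hA0
        exact mul_le_mul_of_nonneg_right h5θ hKθ
    _ = (5 * (2*C) ^ ((1:ℝ)/d)) * (K:ℝ)^θ := by ring
    _ ≤ (K:ℝ)^((1:ℝ)/d) * (K:ℝ)^θ := mul_le_mul_of_nonneg_right hA5 hKθ
    _ = (K:ℝ)^((1:ℝ)/d + θ) := (Real.rpow_add' hK0 (by rw [hθ]; field_simp; exact div_ne_zero (ne_of_gt (by linarith)) hd0.ne')).symm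
    _ = (K:ℝ)^(1:ℝ) := by congr 1; rw [hθ]; field_simp; ring
    _ = K := Real.rpow_one _


/-- Corollary: if `R_M(n) ≤ C·n^{d-1}` for all `n ≥ 1`, then for all large enough
`K` there is `L` such that any point of norm `≥ L` admits a nonzero local period
`v` with `‖v‖ ≤ (2C)^{1/d}·(5K)^{(d-1)/d}` inside the ball of radius `K`. -/
theorem local_period_corollary (d : ℕ) (hd : 1 ≤ d) (M : Set (Fin d → ℤ))
    (C : ℝ) (hC : 0 < C)
    (hR : ∀ n : ℕ, 1 ≤ n → (recBlockCount M n : ℝ) ≤ C * (n : ℝ) ^ (d - 1)) :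
    ∃ K₀ : ℕ, ∀ K : ℕ, K₀ ≤ K → ∃ L : ℕ,
      ∀ x : Fin d → ℤ, L ≤ supNorm x →
        ∃ v : Fin d → ℤ, v ≠ 0 ∧
          (supNorm v : ℝ) ≤
            (2 * C) ^ ((1 : ℝ) / d) * (5 * (K : ℝ)) ^ (((d : ℝ) - 1) / d) ∧
          vPeriodicInside M v (ball x K) := by
  classical
  have hne : Nonempty (Fin d) := ⟨⟨0, hd⟩⟩
  refine ⟨⌈(5:ℝ)^d * (2*C)⌉₊ + 2, fun K hK => ?_⟩
  have hK2 : 2 ≤ K := le_trans (Nat.le_add_left 2 _) hK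
  have hKC : (5:ℝ)^d * (2*C) ≤ K := by
    rw [← Nat.ceil_le]; omega
  have hK1 : (1:ℝ) ≤ K := by exact_mod_cast (by omega : 1 ≤ K)
  set t : ℝ := (2*C) ^ ((1:ℝ)/d) * (5*(K:ℝ)) ^ (((d:ℝ)-1)/d) with htdef
  have ht0 : 0 < t := by
    apply mul_pos <;> apply Real.rpow_pos_of_pos <;> [linarith; skip]
    have : (0:ℝ) < K := by linarith
    linarith
  have htK : t ≤ K := t_le_K' hd C hC K hK1 hKC
  set r : ℕ := ⌈t⌉₊ with hrdef
  have hr1 : 1 ≤ r := Nat.one_le_ceil_iff.mpr ht0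
  have hrt : t ≤ r := Nat.le_ceil t
  have hrK : r ≤ K := by
    have h1 : (r:ℝ) < t + 1 := Nat.ceil_lt_add_one ht0.le
    have h2 : (r:ℝ) < (K:ℝ) + 1 := by linarith
    exact_mod_cast Nat.lt_add_one_iff.mp (by exact_mod_cast h2)
  set n : ℕ := 2*K - 1 + 2*r with hndef
  have hn1 : 1 ≤ n := by omega
  have hn5K : n ≤ 5*K := by omega
  -- counting
  have hcount : recBlockCount M n < r ^ d := by
    have h1 : (recBlockCount M n : ℝ) ≤ C * (n : ℝ) ^ (d - 1) := hR n hn1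
    have hnpow : (0:ℝ) < (n:ℝ) ^ (d-1) := by positivity
    have h4 : (n:ℝ) ^ (d-1) ≤ (5*(K:ℝ)) ^ (d-1) := by
      apply pow_le_pow_left₀ (by positivity)
      exact_mod_cast hn5K
    have h5 : t ^ d = 2*C*(5*(K:ℝ)) ^ (d-1) := pow_eq' hd C hC K
    have h6 : t ^ d ≤ (r:ℝ) ^ d := pow_le_pow_left₀ ht0.le hrt d
    have : (recBlockCount M n : ℝ) < (r:ℝ) ^ d := by
      calc (recBlockCount M n : ℝ) ≤ C * (n:ℝ) ^ (d-1) := h1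
        _ < 2*C*(n:ℝ) ^ (d-1) := by nlinarith
        _ ≤ 2*C*(5*(K:ℝ)) ^ (d-1) := by nlinarith
        _ = t ^ d := h5.symm
        _ ≤ (r:ℝ) ^ d := h6
    exact_mod_cast this
  obtain ⟨L', hL'⟩ := exists_far_recurrent M n
  refine ⟨L' + K + r, fun x hx => ?_⟩
  set y : Fin d → ℤ := fun i => x i - ((K:ℤ) - 1 + r) with hydef
  -- pigeonhole setup
  set s : Finset (Fin d → ℤ) := Fintype.piFinset fun _ => Finset.Ico (0:ℤ) (r:ℤ)
    with hsdef
  have hscard : s.card = r ^ d := by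
    rw [hsdef, Fintype.card_piFinset]
    simp
  have hRecFin : ({B : (Fin d → Fin n) → Prop | IsRecurrentBlock M n B}).Finite :=
    Set.toFinite _
  have htcard : hRecFin.toFinset.card = recBlockCount M n :=
    (Set.ncard_eq_toFinset_card _ hRecFin).symm
  -- norm of x is attained
  obtain ⟨i0, -, hi0⟩ := Finset.exists_mem_eq_sup Finset.univ Finset.univ_nonempty
    (fun i => (x i).natAbs)
  have hxi0 : L' + K + r ≤ (x i0).natAbs := by
    rw [← hi0]; exact hx
  have hmaps : ∀ v ∈ s, blockOf M (fun i => y i + v i) n ∈ hRecFin.toFinset := by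
    intro v hv
    rw [Set.Finite.mem_toFinset]
    apply hL'
    have hv0 : 0 ≤ v i0 ∧ v i0 < (r:ℤ) := by
      have := Fintype.mem_piFinset.mp hv i0
      exact Finset.mem_Ico.mp this
    have hcomp : L' ≤ (y i0 + v i0).natAbs := by
      rw [hydef]
      simp only []
      omega
    calc L' ≤ (y i0 + v i0).natAbs := hcomp
      _ ≤ supNorm (fun i => y i + v i) := by
          unfold supNorm
          exact Finset.le_sup (f := fun i => (y i + v i).natAbs) (Finset.mem_univ i0)
  obtain ⟨v1, hv1, v2, hv2, hv12, heq⟩ :=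
    Finset.exists_ne_map_eq_of_card_lt_of_maps_to
      (by rw [hscard, htcard]; exact hcount) hmaps
  have hv1m : ∀ i, 0 ≤ v1 i ∧ v1 i < (r:ℤ) := fun i =>
    Finset.mem_Ico.mp (Fintype.mem_piFinset.mp hv1 i)
  have hv2m : ∀ i, 0 ≤ v2 i ∧ v2 i < (r:ℤ) := fun i =>
    Finset.mem_Ico.mp (Fintype.mem_piFinset.mp hv2 i)
  refine ⟨v2 - v1, sub_ne_zero.mpr (Ne.symm hv12), ?_, ?_⟩
  · -- norm bound
    have hsn : supNorm (v2 - v1) ≤ r - 1 := by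
      apply Finset.sup_le
      intro i _
      have h1 := hv1m i
      have h2 := hv2m i
      simp only [Pi.sub_apply]
      omega
    have hcast : ((supNorm (v2 - v1) : ℝ)) ≤ (r:ℝ) - 1 := by
      have : ((r - 1 : ℕ) : ℝ) = (r:ℝ) - 1 := by
        push_cast [Nat.cast_sub hr1]; ring
      rw [← this]
      exact_mod_cast hsn
    have hr1t : (r:ℝ) - 1 ≤ t := by
      have := Nat.ceil_lt_add_one ht0.le
      rw [← hrdef] at this
      linarith
    calc ((supNorm (v2 - v1) : ℝ)) ≤ (r:ℝ) - 1 := hcast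
      _ ≤ t := hr1t
  · -- periodicity
    intro m hm hmv
    have hmc : ∀ i, (x i - m i).natAbs < K := fun i => by
      have h := hm
      simp only [ball, Set.mem_setOf_eq] at h
      calc (x i - m i).natAbs = ((x - m) i).natAbs := by simp
        _ ≤ supNorm (x - m) := by
            unfold supNorm
            exact Finset.le_sup (f := fun i => ((x - m) i).natAbs) (Finset.mem_univ i)
        _ < K := h
    have hwb : ∀ i, 0 ≤ m i - (y i + v1 i) ∧ m i - (y i + v1 i) < (n:ℤ) := by
      intro i
      have h1 := hmc i
      have h2 := hv1m i
      rw [hydef]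
      simp only []
      omega
    set w : Fin d → Fin n := fun i =>
      ⟨(m i - (y i + v1 i)).toNat, by have := hwb i; omega⟩ with hwdef
    have hp1 : (fun i => (y i + v1 i) + ((w i : ℕ) : ℤ)) = m := by
      funext i
      have := hwb i
      simp only [hwdef]
      omega
    have hp2 : (fun i => (y i + v2 i) + ((w i : ℕ) : ℤ)) = m + (v2 - v1) := by
      funext i
      have := hwb i
      simp only [hwdef, Pi.add_apply, Pi.sub_apply]
      omega
    have happ := congrFun heq w
    simp only [blockOf] at happ
    constructor
    · intro hmem
      rw [← hp2]
      have : (fun i => y i + v1 i + ((w i : ℕ) : ℤ)) ∈ M := by rw [hp1]; exact hmem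
      have h2 : (fun i => y i + v1 i + ((w i : ℤ))) ∈ M := by
        convert this using 2
      rw [happ] at h2
      convert h2 using 2
    · intro hmem
      rw [← hp2] at hmem
      have h2 : (fun i => y i + v2 i + ((w i : ℤ))) ∈ M := by
        convert hmem using 2
      rw [← happ] at h2
      rw [← hp1]
      convert h2 using 2
end
end

section
/- Let M ⊆ ℤ², x ∈ ℤ², n ≥ 1 and v ∈ ℤ²∖{0} with ‖v‖ < n. Suppose M is v-periodic inside B(x,n) and M is not w-periodic inside B(x,n) for any nonzero w ∈ ℤ² with ‖w‖ < ‖v‖. Then the ‖v‖² blocks M_{x − n·𝟙 − z, 2n+‖v‖}, for z ranging over {0,…,‖v‖−1}², are pairwise distinct (where 𝟙 = (1,1)). -/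
open Classical

noncomputable section

/-- Lemma: if `M ⊆ ℤ²` is `v`-periodic inside `B(x,n)` with `‖v‖ < n` and `v` is a
minimal-norm local period there, then the `‖v‖²` blocks
`M_{x - n·𝟙 - z, 2n + ‖v‖}`, `z ∈ {0,…,‖v‖-1}²`, are pairwise distinct. -/
theorem distinct_blocks_of_minimal_period (M : Set (Fin 2 → ℤ))
    (x : Fin 2 → ℤ) (n : ℕ) (hn : 1 ≤ n)
    (v : Fin 2 → ℤ) (hv : v ≠ 0) (hvn : supNorm v < n)
    (hper : vPeriodicInside M v (ball x n))
    (hmin : ∀ w : Fin 2 → ℤ, w ≠ 0 → supNorm w < supNorm v →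
      ¬ vPeriodicInside M w (ball x n)) :
    ∀ z₁ z₂ : Fin 2 → ℤ,
      (∀ t, 0 ≤ z₁ t ∧ z₁ t < (supNorm v : ℤ)) →
      (∀ t, 0 ≤ z₂ t ∧ z₂ t < (supNorm v : ℤ)) →
      blockOf M (x - n • (1 : Fin 2 → ℤ) - z₁) (2 * n + supNorm v) =
        blockOf M (x - n • (1 : Fin 2 → ℤ) - z₂) (2 * n + supNorm v) →
      z₁ = z₂ := by
  intro z₁ z₂ h₁ h₂ hblock
  by_contra hne
  have hs1 : 1 ≤ supNorm v := by
    rcases Nat.eq_zero_or_pos (supNorm v) with h | h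
    · exfalso; apply hv; funext i
      have hle : (v i).natAbs ≤ supNorm v :=
        Finset.le_sup (f := fun i => (v i).natAbs) (Finset.mem_univ i)
      rw [h] at hle
      simp only [Pi.zero_apply]
      omega
    · exact h
  refine hmin (z₁ - z₂) (sub_ne_zero.mpr hne) ?_ ?_
  · rw [supNorm, Finset.sup_lt_iff (by simp only [bot_eq_zero]; omega : (⊥ : ℕ) < supNorm v)]
    intro i _
    have a1 := (h₁ i).1; have a2 := (h₁ i).2
    have b1 := (h₂ i).1; have b2 := (h₂ i).2
    simp only [Pi.sub_apply]
    omega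
  · intro m hm _
    have hmi : ∀ i, (x i - m i).natAbs < n := by
      intro i
      have hle : ((x - m) i).natAbs ≤ supNorm (x - m) :=
        Finset.le_sup (f := fun i => ((x - m) i).natAbs) (Finset.mem_univ i)
      have h' : supNorm (x - m) < n := hm
      simp only [Pi.sub_apply] at hle
      exact lt_of_le_of_lt hle h'
    have key : ∀ i, 0 ≤ m i - x i + z₁ i + n ∧
        m i - x i + z₁ i + n < ((2 * n + supNorm v : ℕ) : ℤ) := by
      intro i
      have := hmi i
      have a1 := (h₁ i).1; have a2 := (h₁ i).2
      push_cast
      omega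
    let w : Fin 2 → Fin (2 * n + supNorm v) := fun i =>
      ⟨(m i - x i + z₁ i + n).toNat, by have := key i; omega⟩
    have hw : ∀ i, ((w i : ℕ) : ℤ) = m i - x i + z₁ i + n := by
      intro i
      have := (key i).1
      simp only [w]
      omega
    have hthis := congrFun hblock w
    simp only [blockOf] at hthis
    have e1 : (fun i => (x - n • (1 : Fin 2 → ℤ) - z₁) i + ((w i : ℕ) : ℤ)) = m := by
      funext i
      simp only [Pi.sub_apply, Pi.smul_apply, Pi.one_apply, nsmul_eq_mul, mul_one, hw, Pi.natCast_apply]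
      ring
    have e2 : (fun i => (x - n • (1 : Fin 2 → ℤ) - z₂) i + ((w i : ℕ) : ℤ)) =
        m + (z₁ - z₂) := by
      funext i
      simp only [Pi.sub_apply, Pi.add_apply, Pi.smul_apply, Pi.one_apply,
        nsmul_eq_mul, mul_one, hw, Pi.natCast_apply]
      ring
    rw [e1, e2] at hthis
    exact iff_of_eq hthis
end
end

section
/- Let M ⊆ ℤ² and C > 0 be such that R_M(n) ≤ C·n for all n ≥ 1. Suppose K and L' are positive integers such that: (1) for every x ∈ ℤ² with ‖x‖ ≥ L' there exists a nonzero v ∈ ℤ² with ‖v‖ ≤ √(10CK) such that M is v-periodic inside B(x,K); (2) √(10CK) ≤ K; (3) 8·(log K)³ + 3CK/(log K) < K. Let L'' be such that for every x ∈ ℤ² with ‖x‖ ≥ L'' the block M_{x,3K} is recurrent, and let L ≥ 2K + L'' + L'. Then there exist vectors x_1, …, x_k ∈ ℤ² and a set V = {v_1, …, v_k} ⊆ ℤ² such that: (a) for every x ∈ ℤ² with ‖x‖ ≥ L there exists v ∈ V such that M is v-periodic inside B(x,K); (b) ‖v_i‖ ≤ √(10CK) for all i; (c) 0, v_1, …,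 v_k are pairwise distinct; (d) ‖x_i‖ ≥ L for all i; (e) for all i, M is v_i-periodic inside B(x_i,K) and M is not w-periodic inside B(x_i,K) for any nonzero w ∈ ℤ² with ‖w‖ < ‖v_i‖; (f) for all i and all j < i, M is not v_j-periodic inside B(x_i,K). -/
open Classical

noncomputable section

/-- Technical lemma producing an ordered family of local periods `v_1,…,v_k`
and witnesses `x_1,…,x_k` from property (P). -/
theorem local_periods_family (M : Set (Fin 2 → ℤ)) (C : ℝ) (hC : 0 < C)
    (hR : ∀ n : ℕ, 1 ≤ n → (recBlockCount M n : ℝ) ≤ C * (n : ℝ))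
    (K L' : ℕ) (hK : 0 < K) (hL' : 0 < L')
    (h1 : ∀ x : Fin 2 → ℤ, L' ≤ supNorm x → ∃ v : Fin 2 → ℤ, v ≠ 0 ∧
      (supNorm v : ℝ) ≤ Real.sqrt (10 * C * K) ∧ vPeriodicInside M v (ball x K))
    (h2 : Real.sqrt (10 * C * K) ≤ (K : ℝ))
    (h3 : 8 * (Real.log K) ^ 3 + 3 * C * K / Real.log K < (K : ℝ))
    (L'' : ℕ)
    (hL'' : ∀ x : Fin 2 → ℤ, L'' ≤ supNorm x →
      IsRecurrentBlock M (3 * K) (blockOf M x (3 * K)))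
    (L : ℕ) (hL : 2 * K + L'' + L' ≤ L) :
    ∃ (k : ℕ) (x v : Fin k → (Fin 2 → ℤ)),
      (∀ y : Fin 2 → ℤ, L ≤ supNorm y →
        ∃ i, vPeriodicInside M (v i) (ball y K)) ∧
      (∀ i, (supNorm (v i) : ℝ) ≤ Real.sqrt (10 * C * K)) ∧
      ((∀ i, v i ≠ 0) ∧ Function.Injective v) ∧
      (∀ i, L ≤ supNorm (x i)) ∧
      (∀ i, vPeriodicInside M (v i) (ball (x i) K) ∧
        ∀ w : Fin 2 → ℤ, w ≠ 0 → supNorm w < supNorm (v i) →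
          ¬ vPeriodicInside M w (ball (x i) K)) ∧
      (∀ i j, j < i → ¬ vPeriodicInside M (v j) (ball (x i) K)) := by
  classical
  have hLL' : L' ≤ L := by omega
  -- minimal period selection
  have hmin : ∀ y : Fin 2 → ℤ, L ≤ supNorm y →
      ∃ v : Fin 2 → ℤ, v ≠ 0 ∧ (supNorm v : ℝ) ≤ Real.sqrt (10 * C * K) ∧
        vPeriodicInside M v (ball y K) ∧
        ∀ w : Fin 2 → ℤ, w ≠ 0 → supNorm w < supNorm v →
          ¬ vPeriodicInside M w (ball y K) := by
    intro y hy
    obtain ⟨v0, hv0ne, hv0le, hv0per⟩ := h1 y (le_trans hLL' hy)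
    have hex : ∃ n, ∃ v : Fin 2 → ℤ, v ≠ 0 ∧ supNorm v = n ∧
        vPeriodicInside M v (ball y K) := ⟨supNorm v0, v0, hv0ne, rfl, hv0per⟩
    obtain ⟨v, hvne, hvn, hvper⟩ := Nat.find_spec hex
    refine ⟨v, hvne, ?_, hvper, ?_⟩
    · have h1' : Nat.find hex ≤ supNorm v0 := Nat.find_min' hex ⟨v0, hv0ne, rfl, hv0per⟩
      have hle : supNorm v ≤ supNorm v0 := by omega
      calc (supNorm v : ℝ) ≤ (supNorm v0 : ℝ) := by exact_mod_cast hle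
        _ ≤ _ := hv0le
    · intro w hw hlt hper
      have := Nat.find_min' hex ⟨w, hw, rfl, hper⟩
      omega
  -- the finite set of candidate period vectors
  set S : Finset (Fin 2 → ℤ) :=
    Fintype.piFinset (fun _ : Fin 2 => Finset.Icc (-(K : ℤ)) (K : ℤ)) with hS
  have hmemS : ∀ v : Fin 2 → ℤ, (supNorm v : ℝ) ≤ Real.sqrt (10 * C * K) → v ∈ S := by
    intro v hv
    have hvK : supNorm v ≤ K := by exact_mod_cast hv.trans h2
    rw [hS, Fintype.mem_piFinset]
    intro i
    have hi : (v i).natAbs ≤ supNorm v :=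
      Finset.le_sup (f := fun j : Fin 2 => (v j).natAbs) (Finset.mem_univ i)
    simp only [Finset.mem_Icc]
    omega
  -- the Good predicate on lists of pairs (x_i, v_i)
  set Good : List ((Fin 2 → ℤ) × (Fin 2 → ℤ)) → Prop := fun l =>
    (∀ p ∈ l, L ≤ supNorm p.1 ∧ (supNorm p.2 : ℝ) ≤ Real.sqrt (10 * C * K) ∧ p.2 ≠ 0 ∧
        vPeriodicInside M p.2 (ball p.1 K) ∧
        (∀ w : Fin 2 → ℤ, w ≠ 0 → supNorm w < supNorm p.2 →
          ¬ vPeriodicInside M w (ball p.1 K))) ∧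
      List.Pairwise (fun p q => ¬ vPeriodicInside M p.2 (ball q.1 K)) l with hGoodDef
  -- length bound for Good lists
  have hlen : ∀ l, Good l → l.length ≤ S.card := by
    intro l hl
    have hpair2 : List.Pairwise (fun p q : (Fin 2 → ℤ) × (Fin 2 → ℤ) => p.2 ≠ q.2) l := by
      refine List.Pairwise.imp_of_mem ?_ hl.2
      intro p q hp hq hnot heq
      exact hnot (heq ▸ (hl.1 q hq).2.2.2.1)
    have hnd : (l.map Prod.snd).Nodup := hpair2.map _ (fun a b h => h)
    have hsub : (l.map Prod.snd).toFinset ⊆ S := by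
      intro v hv
      rw [List.mem_toFinset, List.mem_map] at hv
      obtain ⟨p, hp, hpv⟩ := hv
      exact hpv ▸ hmemS p.2 (hl.1 p hp).2.1
    calc l.length = (l.map Prod.snd).length := (List.length_map _).symm
      _ = (l.map Prod.snd).toFinset.card := (List.toFinset_card_of_nodup hnd).symm
      _ ≤ S.card := Finset.card_le_card hsub
  -- extension of a non-covering Good list
  have hext : ∀ l, Good l →
      ∀ y : Fin 2 → ℤ, L ≤ supNorm y →
        (∀ p ∈ l, ¬ vPeriodicInside M p.2 (ball y K)) →
        ∃ l', Good l' ∧ l'.length = l.length + 1 := by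
    intro l hl y hy hnone
    obtain ⟨v, hvne, hvle, hvper, hvmin⟩ := hmin y hy
    refine ⟨l ++ [(y, v)], ⟨?_, ?_⟩, by simp⟩
    · intro p hp
      rcases List.mem_append.mp hp with hp | hp
      · exact hl.1 p hp
      · simp only [List.mem_singleton] at hp
        subst hp
        exact ⟨hy, hvle, hvne, hvper, hvmin⟩
    · rw [List.pairwise_append]
      refine ⟨hl.2, List.pairwise_singleton _ _, ?_⟩
      intro p hp q hq
      simp only [List.mem_singleton] at hq
      subst hq
      exact hnone p hp
  -- a Good list of maximal length
  set P : ℕ → Prop := fun n => ∃ l, Good l ∧ l.length = n with hPdef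
  have hP0 : P 0 := ⟨[], ⟨by simp, List.Pairwise.nil⟩, rfl⟩
  set m := Nat.findGreatest P S.card with hm
  have hPm : P m := Nat.findGreatest_spec (Nat.zero_le _) hP0
  obtain ⟨l, hGood, hlenm⟩ := hPm
  -- the maximal list covers all far points
  have hcov : ∀ y : Fin 2 → ℤ, L ≤ supNorm y →
      ∃ p ∈ l, vPeriodicInside M p.2 (ball y K) := by
    intro y hy
    by_contra hcon
    push_neg at hcon
    obtain ⟨l', hG', hlen'⟩ := hext l hGood y hy hcon
    have hlt : m < l'.length := by omega
    have hle' : l'.length ≤ S.card := hlen l' hG'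
    exact Nat.findGreatest_is_greatest hlt hle' ⟨l', hG', rfl⟩
  -- assemble the answer
  have hpg := List.pairwise_iff_get.mp hGood.2
  refine ⟨l.length, fun i => (l.get i).1, fun i => (l.get i).2, ?_, ?_, ⟨?_, ?_⟩, ?_, ?_, ?_⟩
  · intro y hy
    obtain ⟨p, hp, hper⟩ := hcov y hy
    obtain ⟨i, hi⟩ := List.mem_iff_get.mp hp
    refine ⟨i, ?_⟩
    show vPeriodicInside M (l.get i).2 (ball y K)
    rw [hi]; exact hper
  · intro i
    exact (hGood.1 _ (l.get_mem i)).2.1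
  · intro i
    exact (hGood.1 _ (l.get_mem i)).2.2.1
  · intro i j hij
    have hij' : (l.get i).2 = (l.get j).2 := hij
    by_contra hne
    rcases lt_trichotomy i j with h | h | h
    · exact (hpg i j h) (by rw [hij']; exact (hGood.1 _ (l.get_mem j)).2.2.2.1)
    · exact hne (by rw [h])
    · exact (hpg j i h) (by rw [← hij']; exact (hGood.1 _ (l.get_mem i)).2.2.2.1)
  · intro i
    exact (hGood.1 _ (l.get_mem i)).1
  · intro i
    exact ⟨(hGood.1 _ (l.get_mem i)).2.2.2.1,
      (hGood.1 _ (l.get_mem i)).2.2.2.2⟩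
  · intro i j hji
    exact hpg j i hji
end
end

section
/- Let d ≥ 1, M ⊆ ℤ^d, and suppose there exists C > 0 such that R_M(n) ≤ C·n^{d−1} for all sufficiently large n. Then for every v ∈ ℤ^d and every ε > 0 there exists n₀ such that for all n ≥ n₀, R_{Bd(M,v)}(n) ≤ (C+ε)·n^{d−1}. -/
open Classical

noncomputable section

lemma supNorm_sub_const {d : ℕ} (hd : 1 ≤ d) (x : Fin d → ℤ) (K : ℕ) :
    supNorm x ≤ supNorm (x - fun _ => (K : ℤ)) + K := by
  set y : Fin d → ℤ := x - fun _ => (K : ℤ) with hy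
  have hne : (Finset.univ : Finset (Fin d)).Nonempty := by
    refine ⟨⟨0, by omega⟩, Finset.mem_univ _⟩
  obtain ⟨i, _, hi⟩ := Finset.exists_mem_eq_sup Finset.univ hne
    (fun i => (x i).natAbs)
  have h2 : (y i).natAbs ≤ supNorm y :=
    Finset.le_sup (f := fun j => (y j).natAbs) (Finset.mem_univ i)
  have h3 : y i = x i - K := by simp [hy]
  rw [h3] at h2
  have : supNorm x = (x i).natAbs := hi
  omega

lemma rec_border_le {d : ℕ} (hd : 1 ≤ d) (M : Set (Fin d → ℤ)) (v : Fin d → ℤ)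
    (n : ℕ) :
    recBlockCount (border M v) n ≤ recBlockCount M (n + 2 * supNorm v) := by
  set K := supNorm v with hK
  set m := n + 2 * K with hm
  have hvK : ∀ i, (v i).natAbs ≤ K := fun i =>
    Finset.le_sup (f := fun j => (v j).natAbs) (Finset.mem_univ i)
  -- embeddings of the index cube
  have he1 : ∀ (w : Fin d → Fin n) (i : Fin d), K + (w i : ℕ) < m := by
    intro w i; have := (w i).isLt; omega
  have he2 : ∀ (w : Fin d → Fin n) (i : Fin d),
      ((K : ℤ) + (w i : ℕ) + v i).toNat < m := by
    intro w i; have := (w i).isLt; have := hvK i; omega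
  set s : Fin d → ℤ := fun _ => (K : ℤ) with hs
  set F : ((Fin d → Fin m) → Prop) → ((Fin d → Fin n) → Prop) :=
    fun B' w => B' (fun i => ⟨K + (w i : ℕ), he1 w i⟩) ∧
      ¬ B' (fun i => ⟨((K : ℤ) + (w i : ℕ) + v i).toNat, he2 w i⟩) with hF
  have hkey : ∀ x : Fin d → ℤ,
      blockOf (border M v) x n = F (blockOf M (x - s) m) := by
    intro x
    funext w
    apply propext
    have hfun1 : (fun i : Fin d => (x - s) i +
        (((⟨K + (w i : ℕ), he1 w i⟩ : Fin m) : ℕ) : ℤ)) =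
        fun i => x i + ((w i : ℕ) : ℤ) := by
      funext i; simp [hs]; push_cast; ring
    have hfun2 : (fun i : Fin d => (x - s) i +
        (((⟨((K : ℤ) + (w i : ℕ) + v i).toNat, he2 w i⟩ : Fin m) : ℕ) : ℤ)) =
        (fun i => x i + ((w i : ℕ) : ℤ)) + v := by
      funext i
      have hnn : (0 : ℤ) ≤ (K : ℤ) + (w i : ℕ) + v i := by
        have := hvK i; omega
      simp only [Pi.sub_apply, Pi.add_apply, hs, Fin.val_mk]
      rw [Int.toNat_of_nonneg hnn]; ring
    simp only [hF, blockOf, border, Set.mem_setOf_eq, hfun1, hfun2]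
  -- recurrence transfer
  have hsurj : ∀ B, IsRecurrentBlock (border M v) n B →
      ∃ B', IsRecurrentBlock M m B' ∧ F B' = B := by
    intro B hB
    choose x hx hbx using hB
    set g : ℕ → ((Fin d → Fin m) → Prop) := fun L => blockOf M (x L - s) m
      with hg
    obtain ⟨B', hB'⟩ := Finite.exists_infinite_fiber g
    have hinf : (g ⁻¹' {B'}).Infinite := Set.infinite_coe_iff.mp hB'
    refine ⟨B', ?_, ?_⟩
    · intro L
      obtain ⟨L', hL'mem, hL'gt⟩ := hinf.exists_gt (L + K)
      refine ⟨x L' - s, ?_, hL'mem⟩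
      have h1 := hx L'
      have h2 : supNorm (x L') ≤ supNorm (x L' - s) + K := by
        rw [hs]; exact supNorm_sub_const hd (x L') K
      omega
    · obtain ⟨L', hL'mem, _⟩ := hinf.exists_gt 0
      have : g L' = B' := hL'mem
      rw [← this, hg]
      simp only
      rw [← hkey, hbx]
  -- counting
  have hsubset : {B : (Fin d → Fin n) → Prop | IsRecurrentBlock (border M v) n B}
      ⊆ F '' {B' | IsRecurrentBlock M m B'} := by
    intro B hB
    obtain ⟨B', h1, h2⟩ := hsurj B hB
    exact ⟨B', h1, h2⟩
  calc recBlockCount (border M v) n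
      ≤ (F '' {B' | IsRecurrentBlock M m B'}).ncard :=
        Set.ncard_le_ncard hsubset (Set.toFinite _)
    _ ≤ recBlockCount M m := Set.ncard_image_le (Set.toFinite _)

/-- Lemma: if `R_M(n) ≤ C·n^{d-1}` for all sufficiently large `n`, then for
every direction `v` and every `ε > 0`, `R_{Bd(M,v)}(n) ≤ (C+ε)·n^{d-1}` for all
sufficiently large `n`. -/
theorem border_complexity (d : ℕ) (hd : 1 ≤ d) (M : Set (Fin d → ℤ))
    (C : ℝ) (hC : 0 < C)
    (hR : ∃ N : ℕ, ∀ n : ℕ, N ≤ n →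
      (recBlockCount M n : ℝ) ≤ C * (n : ℝ) ^ (d - 1)) :
    ∀ (v : Fin d → ℤ) (ε : ℝ), 0 < ε → ∃ n₀ : ℕ, ∀ n : ℕ, n₀ ≤ n →
      (recBlockCount (border M v) n : ℝ) ≤ (C + ε) * (n : ℝ) ^ (d - 1) := by
  intro v ε hε
  obtain ⟨N, hN⟩ := hR
  set e := d - 1 with he
  set a := 2 * supNorm v with ha
  -- asymptotic estimate: C * (n+a)^e ≤ (C+ε) * n^e eventually
  have htend : Filter.Tendsto (fun n : ℕ => (((n : ℝ) + a) / n) ^ e)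
      Filter.atTop (nhds 1) := by
    have h0 : Filter.Tendsto (fun n : ℕ => (a : ℝ) / n) Filter.atTop (nhds 0) :=
      tendsto_const_div_atTop_nhds_zero_nat (a : ℝ)
    have h1 : Filter.Tendsto (fun n : ℕ => 1 + (a : ℝ) / n) Filter.atTop
        (nhds 1) := by
      have := Filter.Tendsto.const_add (1 : ℝ) h0
      simpa using this
    have h2 : Filter.Tendsto (fun n : ℕ => (1 + (a : ℝ) / n) ^ e) Filter.atTop
        (nhds 1) := by
      have := h1.pow e
      simpa using this
    refine h2.congr' ?_
    filter_upwards [Filter.eventually_ge_atTop 1] with n hn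
    have hn0 : (n : ℝ) ≠ 0 := by positivity
    field_simp
  have hlt : (1 : ℝ) < (C + ε) / C := by
    rw [lt_div_iff₀ hC]; linarith
  have hev : ∀ᶠ n : ℕ in Filter.atTop,
      (((n : ℝ) + a) / n) ^ e < (C + ε) / C :=
    htend.eventually_lt_const hlt
  obtain ⟨n₁, hn₁⟩ := Filter.eventually_atTop.mp hev
  refine ⟨max (max n₁ 1) N, fun n hn => ?_⟩
  have hn1 : n₁ ≤ n := le_trans (le_trans (le_max_left _ _) (le_max_left _ _)) hn
  have hnpos : 1 ≤ n := le_trans (le_trans (le_max_right _ _) (le_max_left _ _)) hn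
  have hnN : N ≤ n := le_trans (le_max_right _ _) hn
  have hstep : recBlockCount (border M v) n ≤ recBlockCount M (n + a) :=
    rec_border_le hd M v n
  have hRa : (recBlockCount M (n + a) : ℝ) ≤ C * ((n + a : ℕ) : ℝ) ^ e :=
    hN (n + a) (by omega)
  have hcast : ((n + a : ℕ) : ℝ) = (n : ℝ) + a := by push_cast; ring
  have hn0 : (0 : ℝ) < (n : ℝ) := by exact_mod_cast hnpos
  have hne : (n : ℝ) ≠ 0 := ne_of_gt hn0
  have hdiv := hn₁ n hn1
  have hexp : ((n : ℝ) + a) ^ e = (((n : ℝ) + a) / n) ^ e * (n : ℝ) ^ e := by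
    rw [div_pow, div_mul_cancel₀]
    positivity
  have hnpe : (0 : ℝ) < (n : ℝ) ^ e := by positivity
  calc (recBlockCount (border M v) n : ℝ)
      ≤ (recBlockCount M (n + a) : ℝ) := by exact_mod_cast hstep
    _ ≤ C * ((n : ℝ) + a) ^ e := by rwa [hcast] at hRa
    _ = C * ((((n : ℝ) + a) / n) ^ e * (n : ℝ) ^ e) := by rw [hexp]
    _ ≤ C * ((C + ε) / C * (n : ℝ) ^ e) := by
        apply mul_le_mul_of_nonneg_left _ (le_of_lt hC)
        exact mul_le_mul_of_nonneg_right (le_of_lt hdiv) (le_of_lt hnpe)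
    _ = (C + ε) * (n : ℝ) ^ e := by
        field_simp
end
end

section
/- Let d ≥ 1, M ⊆ ℤ^d and v ∈ ℤ^d. Then for every n ≥ 1, R_{Bd(M,v)}(n) ≤ R_M(n + ‖v‖). -/
open Classical

noncomputable section

section BorderAux

variable {ι : Type} [Fintype ι]

private lemma natAbs_le_supNorm' (x : ι → ℤ) (i : ι) : (x i).natAbs ≤ supNorm x := by
  unfold supNorm
  exact Finset.le_sup (f := fun j => (x j).natAbs) (Finset.mem_univ i)

private lemma supNorm_add_le' (x y : ι → ℤ) :
    supNorm (x + y) ≤ supNorm x + supNorm y := by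
  unfold supNorm
  apply Finset.sup_le
  intro i _
  calc ((x + y) i).natAbs = (x i + y i).natAbs := rfl
    _ ≤ (x i).natAbs + (y i).natAbs := Int.natAbs_add_le _ _
    _ ≤ _ := Nat.add_le_add (natAbs_le_supNorm' x i) (natAbs_le_supNorm' y i)

end BorderAux

private def offA {d : ℕ} (v : Fin d → ℤ) (i : Fin d) : ℕ := (min (v i) 0).natAbs

private def offB {d : ℕ} (v : Fin d → ℤ) (i : Fin d) : ℕ := (max (v i) 0).toNat

private lemma offA_le {d : ℕ} (v : Fin d → ℤ) (i : Fin d) : offA v i ≤ supNorm v := by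
  refine le_trans ?_ (natAbs_le_supNorm' v i)
  simp only [offA]
  omega

private lemma offB_le {d : ℕ} (v : Fin d → ℤ) (i : Fin d) : offB v i ≤ supNorm v := by
  refine le_trans ?_ (natAbs_le_supNorm' v i)
  simp only [offB]
  omega

private def embA {d n : ℕ} (v : Fin d → ℤ) (w : Fin d → Fin n) :
    Fin d → Fin (n + supNorm v) :=
  fun i => ⟨w i + offA v i, by have := (w i).isLt; have := offA_le v i; omega⟩

private def embB {d n : ℕ} (v : Fin d → ℤ) (w : Fin d → Fin n) :
    Fin d → Fin (n + supNorm v) :=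
  fun i => ⟨w i + offB v i, by have := (w i).isLt; have := offB_le v i; omega⟩

private def gMap {d n : ℕ} (v : Fin d → ℤ)
    (C : (Fin d → Fin (n + supNorm v)) → Prop) : (Fin d → Fin n) → Prop :=
  fun w => C (embA v w) ∧ ¬ C (embB v w)

private def sft {d : ℕ} (v : Fin d → ℤ) : Fin d → ℤ := fun i => -(offA v i : ℤ)

private lemma border_key {d n : ℕ} (M : Set (Fin d → ℤ)) (v : Fin d → ℤ)
    (x : Fin d → ℤ) :
    blockOf (border M v) x n = gMap v (blockOf M (x + sft v) (n + supNorm v)) := by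
  funext w
  have h1 : (fun i => (x + sft v) i + ((embA v w) i : ℤ)) = fun i => x i + (w i : ℤ) := by
    funext i
    simp only [Pi.add_apply, sft, embA, offA, Fin.val_mk, Nat.cast_add]
    omega
  have h2 : (fun i => (x + sft v) i + ((embB v w) i : ℤ))
      = (fun i => x i + (w i : ℤ)) + v := by
    funext i
    simp only [Pi.add_apply, sft, embA, embB, offA, offB, Fin.val_mk, Nat.cast_add]
    omega
  show ((fun i => x i + (w i : ℤ)) ∈ M ∧ (fun i => x i + (w i : ℤ)) + v ∉ M) =
    (((fun i => (x + sft v) i + ((embA v w) i : ℤ)) ∈ M) ∧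
      ¬ ((fun i => (x + sft v) i + ((embB v w) i : ℤ)) ∈ M))
  rw [h1, h2]

/-- Lemma: `R_{Bd(M,v)}(n) ≤ R_M(n + ‖v‖)` for all `n ≥ 1`. -/
theorem border_recBlockCount_le (d : ℕ) (hd : 1 ≤ d) (M : Set (Fin d → ℤ))
    (v : Fin d → ℤ) :
    ∀ n : ℕ, 1 ≤ n →
      recBlockCount (border M v) n ≤ recBlockCount M (n + supNorm v) := by
  intro n hn
  have hsub : {B : (Fin d → Fin n) → Prop | IsRecurrentBlock (border M v) n B} ⊆
      gMap v '' {C : (Fin d → Fin (n + supNorm v)) → Prop |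
        IsRecurrentBlock M (n + supNorm v) C} := by
    intro B hB
    choose x hx1 hx2 using hB
    set h : ℕ → ((Fin d → Fin (n + supNorm v)) → Prop) :=
      fun L => blockOf M (x (L + supNorm v) + sft v) (n + supNorm v) with hh
    have hgB : ∀ L, gMap v (h L) = B := by
      intro L
      rw [hh]
      simp only
      rw [← border_key]
      exact hx2 _
    have hnorm : ∀ L, L ≤ supNorm (x (L + supNorm v) + sft v) := by
      intro L
      have h3 : supNorm (-(sft v)) ≤ supNorm v := by
        unfold supNorm
        apply Finset.sup_le
        intro i _
        refine le_trans ?_ (natAbs_le_supNorm' v i)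
        simp only [sft, offA, Pi.neg_apply]
        omega
      have h4 := supNorm_add_le' (x (L + supNorm v) + sft v) (-(sft v))
      have h5 : (x (L + supNorm v) + sft v) + (-(sft v)) = x (L + supNorm v) := by
        funext i
        simp
      rw [h5] at h4
      have h6 := hx1 (L + supNorm v)
      omega
    obtain ⟨C, hC'⟩ := Finite.exists_infinite_fiber h
    have hC : (h ⁻¹' {C}).Infinite := Set.infinite_coe_iff.mp hC' 
    refine ⟨C, ?_, ?_⟩
    · intro L
      obtain ⟨L', hL'mem, hLL'⟩ := hC.exists_gt L
      have hval : h L' = C := hL'mem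
      rw [hh] at hval
      exact ⟨x (L' + supNorm v) + sft v, le_trans hLL'.le (hnorm L'), hval⟩
    · obtain ⟨L0, hL0⟩ := hC.nonempty
      have hval : h L0 = C := hL0
      rw [← hval]
      exact hgB L0
  have htfin : {C : (Fin d → Fin (n + supNorm v)) → Prop |
      IsRecurrentBlock M (n + supNorm v) C}.Finite := Set.toFinite _
  calc recBlockCount (border M v) n
      ≤ (gMap v '' {C : (Fin d → Fin (n + supNorm v)) → Prop |
          IsRecurrentBlock M (n + supNorm v) C}).ncard :=
        Set.ncard_le_ncard hsub (htfin.image _)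
    _ ≤ _ := Set.ncard_image_le htfin
end
end

section
/- Let T ⊆ ℤ² be the set defined by (i,j) ∈ T if and only if i ≥ 0, j ≥ 0, and there exists an integer n > 0 with i = n·2^{j+1}. Then for every n ≥ 1, R_T(n) ≥ n². -/
open Classical

noncomputable section

/-- The Toeplitz-like set: `(i,j) ∈ T` iff `i,j ≥ 0` and `i = n·2^(j+1)` for
some integer `n > 0`. -/
def toeplitzSet : Set (Fin 2 → ℤ) :=
  {x | 0 ≤ x 0 ∧ 0 ≤ x 1 ∧ ∃ n : ℤ, 0 < n ∧ x 0 = n * 2 ^ ((x 1).toNat + 1)}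


/-- Membership in the Toeplitz set is equivalent to positivity plus divisibility. -/
lemma mem_toeplitz_iff (x : Fin 2 → ℤ) :
    x ∈ toeplitzSet ↔ 0 < x 0 ∧ 0 ≤ x 1 ∧ (2 : ℤ) ^ ((x 1).toNat + 1) ∣ x 0 := by
  constructor
  · rintro ⟨h0, h1, q, hq, hx⟩
    have hp : (0:ℤ) < 2 ^ ((x 1).toNat + 1) := by positivity
    exact ⟨by nlinarith, h1, ⟨q, by linarith⟩⟩
  · rintro ⟨h0, h1, q, hx⟩
    refine ⟨le_of_lt h0, h1, q, ?_, by linarith⟩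
    by_contra hq
    push_neg at hq
    have hp : (0:ℤ) < 2 ^ ((x 1).toNat + 1) := by positivity
    nlinarith

/-- For the Toeplitz-like set, `R_T(n) ≥ n²` for every `n ≥ 1`. -/
theorem toeplitz_recBlockCount_ge : ∀ n : ℕ, 1 ≤ n →
    n ^ 2 ≤ recBlockCount toeplitzSet n := by
  intro n hn
  haveI : NeZero n := ⟨by omega⟩
  set f : Fin n × Fin n → ((Fin 2 → Fin n) → Prop) :=
    fun p w => w 0 = p.1 ∧ (w 1 : ℕ) ≤ (p.2 : ℕ) with hf_def
  -- injectivity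
  have hinj : Function.Injective f := by
    rintro ⟨c, h⟩ ⟨c', h'⟩ heq
    have h1 := congrFun heq ![c, 0]
    have h2 := congrFun heq ![c, h]
    have h3 := congrFun heq ![c', h']
    simp [hf_def] at h1 h2 h3
    have hc : c = c' := h1
    have hhh' : (h : ℕ) ≤ (h' : ℕ) := h2.2
    have hh'h : (h' : ℕ) ≤ (h : ℕ) := h3.2
    exact Prod.ext hc (Fin.ext (le_antisymm hhh' hh'h))
  -- each f p is recurrent
  have hrec : ∀ p : Fin n × Fin n, IsRecurrentBlock toeplitzSet n (f p) := by
    rintro ⟨c, h⟩ L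
    set k : ℕ := n + (h : ℕ) + 1 with hk
    set m : ℤ := 2 * L + 1 with hm
    set a : ℤ := 2 ^ k * m - (c : ℕ) with ha
    have h1k : (1:ℤ) ≤ 2 ^ k := one_le_pow₀ (by norm_num)
    have hnk : (n : ℤ) < 2 ^ k := by
      have h0 : (n : ℤ) < 2 ^ n := by exact_mod_cast (Nat.lt_two_pow_self (n := n))
      have h2 : (2:ℤ) ^ n ≤ 2 ^ k := pow_le_pow_right₀ (by norm_num) (by omega)
      linarith
    have hcn : ((c : ℕ) : ℤ) < n := by exact_mod_cast c.isLt
    have hc0 : (0:ℤ) ≤ ((c : ℕ) : ℤ) := Int.natCast_nonneg _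
    have hm1 : (1 : ℤ) ≤ m := by rw [hm]; linarith [Int.natCast_nonneg L]
    have ham : m ≤ a := by
      rw [ha]
      nlinarith [mul_nonneg (by linarith : (0:ℤ) ≤ 2 ^ k - 1) (by linarith : (0:ℤ) ≤ m - 1)]
    have haL : (L : ℤ) ≤ a := by
      have : (L : ℤ) ≤ m := by rw [hm]; linarith [Int.natCast_nonneg L]
      linarith
    refine ⟨![a, (n : ℤ)], ?_, ?_⟩
    · -- sup norm bound
      have hL : L ≤ a.natAbs := by omega
      refine le_trans ?_
        (Finset.le_sup (f := fun i => ((![a, (n:ℤ)]) i).natAbs) (Finset.mem_univ 0))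
      simpa using hL
    · funext w
      have hw0 : ((w 0 : ℕ) : ℤ) < n := by exact_mod_cast (w 0).isLt
      have hw0' : (0:ℤ) ≤ ((w 0 : ℕ) : ℤ) := Int.natCast_nonneg _
      have hw1 : ((w 1 : ℕ) : ℤ) < n := by exact_mod_cast (w 1).isLt
      show ((fun i => ![a, (n:ℤ)] i + ((w i : ℕ) : ℤ)) ∈ toeplitzSet) = _
      rw [eq_iff_iff, mem_toeplitz_iff]
      simp only [hf_def, Matrix.cons_val_zero, Matrix.cons_val_one, Matrix.head_cons]
      have htn : (((n : ℤ) + ((w 1 : ℕ) : ℤ)).toNat) = n + (w 1 : ℕ) := by omega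
      rw [htn]
      have hn2 : (n : ℤ) < 2 ^ (n + 1) := by
        have h0 : (n : ℤ) < 2 ^ n := by exact_mod_cast (Nat.lt_two_pow_self (n := n))
        have : (2:ℤ) ^ n ≤ 2 ^ (n+1) := pow_le_pow_right₀ (by norm_num) (by omega)
        linarith
      constructor
      · rintro ⟨hpos, -, hdvd⟩
        -- first show w 0 = c
        have hdvd' : (2:ℤ) ^ (n + 1) ∣ a + (w 0 : ℕ) :=
          dvd_trans (pow_dvd_pow 2 (by omega)) hdvd
        have hk1 : (2:ℤ) ^ (n + 1) ∣ 2 ^ k * m :=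
          Dvd.dvd.mul_right (pow_dvd_pow 2 (by omega)) m
        have hdc : (2:ℤ) ^ (n + 1) ∣ ((w 0 : ℕ) : ℤ) - (c : ℕ) := by
          have hsub := dvd_sub hdvd' hk1
          rw [show a + ((w 0 : ℕ) : ℤ) - 2 ^ k * m = ((w 0 : ℕ) : ℤ) - (c : ℕ) by
            rw [ha]; ring] at hsub
          exact hsub
        have hwc : ((w 0 : ℕ) : ℤ) = ((c : ℕ) : ℤ) := by
          have habs : |((w 0 : ℕ) : ℤ) - ((c : ℕ) : ℤ)| < 2 ^ (n + 1) := by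
            rw [abs_lt]; constructor <;> linarith
          have := Int.eq_zero_of_abs_lt_dvd hdc habs
          linarith
        have hw0c : w 0 = c := Fin.ext (by exact_mod_cast hwc)
        refine ⟨hw0c, ?_⟩
        -- now the height bound
        by_contra hgt
        push_neg at hgt
        have hdvd2 : (2:ℤ) ^ (k + 1) ∣ a + (w 0 : ℕ) :=
          dvd_trans (pow_dvd_pow 2 (by omega)) hdvd
        have hac : a + ((w 0 : ℕ) : ℤ) = 2 ^ k * m := by
          rw [ha, hw0c]; ring
        rw [hac, pow_succ] at hdvd2
        have hne : (2:ℤ) ^ k ≠ 0 := by positivity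
        have h2m : (2:ℤ) ∣ m := (mul_dvd_mul_iff_left hne).mp hdvd2
        rw [hm] at h2m
        omega
      · rintro ⟨hw0c, hle⟩
        have hac : a + ((w 0 : ℕ) : ℤ) = 2 ^ k * m := by
          rw [ha, hw0c]; ring
        refine ⟨by nlinarith, by positivity, ?_⟩
        rw [hac]
        exact Dvd.dvd.mul_right (pow_dvd_pow 2 (by omega)) m
  -- counting
  have hfin : {B : (Fin 2 → Fin n) → Prop | IsRecurrentBlock toeplitzSet n B}.Finite :=
    Set.toFinite _
  have hsub : Set.range f ⊆ {B | IsRecurrentBlock toeplitzSet n B} := by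
    rintro B ⟨p, rfl⟩; exact hrec p
  calc n ^ 2 = Nat.card (Fin n × Fin n) := by simp [Nat.card_eq_fintype_card, sq]
  _ = (Set.range f).ncard := by
      rw [← Set.image_univ, Set.ncard_image_of_injective _ hinj, Set.ncard_univ]
  _ ≤ _ := Set.ncard_le_ncard hsub hfin
end
end
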